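/- arXiv:1702.01390 — 3 statements merged into one kernel-verified Lean document; each statement's English description precedes it below -/
import Mathlib

section
/- Kneser's conjecture: For all integers k ≥ 1 and n ≥ 2k-1, the chromatic number of the Kneser graph KG(n,k) equals n - 2k + 2. -/
/-- Membership in the Hom poset `Hom_p(K_r, H)`: an `r`-tuple (indexed by `ZMod r`)
of non-empty subsets of `V(H)` such that distinct coordinates are completely joined. -/
def HomPosetMem {V : Type*} (H : SimpleGraph V) (r : ℕ) (A : ZMod r → Set V) : Prop :=
  (∀ i, (A i).Nonempty) ∧ ∀ i j : ZMod r, i ≠ j → ∀ a ∈ A i, ∀ b ∈ A j, H.Adj a b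

/-- The Hom poset `Hom_p(K_r, H)`. -/
def HomPoset {V : Type*} (H : SimpleGraph V) (r : ℕ) : Type _ :=
  {A : ZMod r → Set V // HomPosetMem H r A}

instance {V : Type*} (H : SimpleGraph V) (r : ℕ) : PartialOrder (HomPoset H r) :=
  PartialOrder.lift Subtype.val Subtype.val_injective

/-- The cyclic-shift action of `ZMod r` on `Hom_p(K_r, H)`. -/
def homShift {V : Type*} (H : SimpleGraph V) {r : ℕ} (g : ZMod r) (A : HomPoset H r) :
    HomPoset H r :=
  ⟨fun i => A.1 (i + g),
    ⟨fun i => A.2.1 (i + g),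
     fun i j hij a ha b hb => A.2.2 (i + g) (j + g) (fun h => hij (by
       have := add_right_cancel h; exact this)) a ha b hb⟩⟩

/-- The compatibility graph of `Hom_p(K_r, H)` with the cyclic shift `ZMod r`-action:
two distinct tuples are adjacent iff one is comparable to a nontrivial shift of the other. -/
def compatGraph {V : Type*} (H : SimpleGraph V) (r : ℕ) : SimpleGraph (HomPoset H r) where
  Adj x y := x ≠ y ∧ ∃ g : ZMod r, g ≠ 0 ∧
      (x ≤ homShift H g y ∨ homShift H g y ≤ x ∨ y ≤ homShift H g x ∨ homShift H g x ≤ y)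
  symm := by
    constructor
    rintro x y ⟨hne, g, hg, hc⟩
    exact ⟨hne.symm, g, hg, by tauto⟩
  loopless := by constructor; rintro x ⟨hne, _⟩; exact hne rfl

/-- The Kneser graph `KG(n,k)`. -/
def KneserGraph (n k : ℕ) : SimpleGraph {S : Finset (Fin n) // S.card = k} where
  Adj S T := S ≠ T ∧ Disjoint S.1 T.1
  symm := ⟨fun S T ⟨h, d⟩ => ⟨h.symm, d.symm⟩⟩
  loopless := ⟨fun S ⟨h, _⟩ => h rfl⟩


open Finset

namespace KneserAux

open Classical in
noncomputable def ind (P : Prop) : ZMod 2 := if P then 1 else 0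

lemma ind_congr {P Q : Prop} (h : P ↔ Q) : ind P = ind Q := by
  unfold ind; split_ifs with h1 h2 <;> tauto

lemma ind_of (P : Prop) (h : P) : ind P = 1 := by unfold ind; split_ifs <;> tauto

lemma ind_of_not (P : Prop) (h : ¬ P) : ind P = 0 := by unfold ind; split_ifs <;> tauto

lemma ind_and (P Q : Prop) : ind (P ∧ Q) = ind P * ind Q := by
  unfold ind; split_ifs <;> tauto

lemma ind_add_self (P : Prop) : ind P + ind P = 0 := by
  unfold ind; split_ifs <;> decide

/-- Alternating predicate for a list sorted (ascending) by absolute value: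
`s` is the expected sign of the next element. -/
def AltL (s : ℤ) : List ℤ → Prop
  | [] => True
  | a :: l => 0 < s * a ∧ (∀ b ∈ l, |a| < |b|) ∧ AltL (-s) l

/-- `AltP s L`: the multiset `L` can be arranged into an alternating list starting
with sign `s`. -/
def AltP (s : ℤ) (L : List ℤ) : Prop := ∃ l, L.Perm l ∧ AltL s l

lemma altP_nil (s : ℤ) : AltP s [] := ⟨[], List.Perm.refl _, trivial⟩

lemma altP_perm {s : ℤ} {L L' : List ℤ} (h : L.Perm L') : AltP s L ↔ AltP s L' := by
  constructor <;> rintro ⟨l, hl, ha⟩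
  · exact ⟨l, h.symm.trans hl, ha⟩
  · exact ⟨l, h.trans hl, ha⟩

/-- Head characterization of `AltP` when the head is a weak minimum. -/
lemma altP_cons {s a : ℤ} {l : List ℤ} (hmin : ∀ b ∈ l, |a| ≤ |b|) :
    AltP s (a :: l) ↔ (0 < s * a ∧ (∀ b ∈ l, |a| < |b|) ∧ AltP (-s) l) := by
  constructor
  · rintro ⟨l₀, hperm, halt⟩
    obtain ⟨c, l₀', rfl⟩ : ∃ c l₀', l₀ = c :: l₀' := by
      cases l₀ with
      | nil => exact absurd hperm.length_eq (by simp)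
      | cons c l₀' => exact ⟨c, l₀', rfl⟩
    obtain ⟨hsc, hstrict, halt'⟩ := halt
    have hac : a = c := by
      have ha : a ∈ c :: l₀' := hperm.mem_iff.mp (by simp)
      rcases List.mem_cons.mp ha with h | h
      · exact h
      · have hc : c ∈ a :: l := hperm.mem_iff.mpr (by simp)
        rcases List.mem_cons.mp hc with h' | h'
        · exact h'.symm
        · exact absurd (hmin c h') (not_le.mpr (hstrict a h))
    subst hac
    have hll : l.Perm l₀' := hperm.cons_inv
    refine ⟨hsc, fun b hb => hstrict b (hll.mem_iff.mp hb), ⟨l₀', hll, halt'⟩⟩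
  · rintro ⟨hs, hstrict, ⟨l', hl', halt'⟩⟩
    exact ⟨a :: l', hl'.cons a, hs, fun b hb => hstrict b (hl'.mem_iff.mpr hb), halt'⟩

/-- An alternating list has pairwise distinct absolute values. -/
lemma altL_pairwise {s : ℤ} {l : List ℤ} (h : AltL s l) :
    l.Pairwise (fun a b => |a| < |b|) := by
  induction l generalizing s with
  | nil => exact List.Pairwise.nil
  | cons a l ih =>
    obtain ⟨_, hstrict, halt⟩ := h
    exact List.Pairwise.cons hstrict (ih halt)

lemma altP_count_le_one {s : ℤ} {L : List ℤ} (h : AltP s L) (a : ℤ) : L.count a ≤ 1 := by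
  obtain ⟨l, hperm, halt⟩ := h
  rw [hperm.count_eq]
  have hnd : l.Nodup := (altL_pairwise halt).imp (fun {x y} h => by
    intro hxy; subst hxy; exact lt_irrefl _ h)
  exact List.nodup_iff_count_le_one.mp hnd a

lemma altL_neg {l : List ℤ} : ∀ {s : ℤ}, (AltL s (l.map (fun a => -a)) ↔ AltL (-s) l) := by
  induction l with
  | nil => simp [AltL]
  | cons a l ih =>
    intro s
    simp only [List.map_cons, AltL]
    constructor
    · rintro ⟨h1, h2, h3⟩
      refine ⟨by nlinarith, fun b hb => by simpa using h2 (-b) (by simpa using hb), ?_⟩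
      have := (ih (s := -s)).mp h3
      simpa using this
    · rintro ⟨h1, h2, h3⟩
      refine ⟨by nlinarith, fun b hb => ?_, ?_⟩
      · obtain ⟨c, hc, rfl⟩ := List.mem_map.mp hb
        simpa using h2 c hc
      · rw [neg_neg] at h3
        exact (ih (s := -s)).mpr (by simpa using h3)

lemma altP_neg {s : ℤ} {L : List ℤ} : AltP s (L.map (fun a => -a)) ↔ AltP (-s) L := by
  constructor
  · rintro ⟨l₀, hperm, halt⟩
    refine ⟨l₀.map (fun a => -a), ?_, altL_neg.mp (by simpa using halt)⟩
    have := hperm.map (fun a : ℤ => -a)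
    simpa [List.map_map, Function.comp] using this
  · rintro ⟨l₀, hperm, halt⟩
    exact ⟨l₀.map (fun a => -a), hperm.map _, altL_neg.mpr (by simpa using halt)⟩

/-- lower bound on the largest label of an alternating list -/
lemma altL_bound {l : List ℤ} : ∀ {s : ℤ}, AltL s l → ∀ k : ℤ, (∀ b ∈ l, k < |b|) →
    l = [] ∨ ∃ a ∈ l, k + l.length ≤ |a| := by
  induction l with
  | nil => exact fun _ _ _ => Or.inl rfl
  | cons a l ih =>
    rintro s ⟨hs, hstrict, halt⟩ k hk
    right
    rcases ih halt (k + 1) (fun b hb => by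
        have h1 : k < |a| := hk a (by simp)
        have h2 : |a| < |b| := hstrict b hb
        omega) with h | ⟨b, hb, hbb⟩
    · subst h
      exact ⟨a, by simp, by have := hk a (by simp); simp; omega⟩
    · exact ⟨b, by simp [hb], by simp; push_cast; omega⟩

end KneserAux

namespace KneserAux

lemma altP_not_of_count {s : ℤ} {L : List ℤ} {a : ℤ} (h : 1 < L.count a) : ¬ AltP s L :=
  fun hA => absurd (altP_count_le_one hA a) (by omega)

/-- Transfer of the "door sum" along a permutation. -/
lemma doorsum_perm {L L' : List ℤ} (h : L.Perm L') :
    ∀ G : List ℤ → ZMod 2, (∀ l l', l.Perm l' → G l = G l') →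
    (∑ t ∈ Finset.range L.length, G (L.eraseIdx t)) =
      (∑ t ∈ Finset.range L'.length, G (L'.eraseIdx t)) := by
  induction h with
  | nil => intro G hG; rfl
  | cons x h ih =>
    intro G hG
    rw [List.length_cons, List.length_cons, Finset.sum_range_succ', Finset.sum_range_succ']
    simp only [List.eraseIdx_cons_succ, List.eraseIdx_cons_zero]
    rw [hG _ _ h, ih (fun l => G (x :: l)) (fun l l' hp => hG _ _ (hp.cons x))]
  | swap x y l =>
    intro G hG
    have h1 : ∀ t, G (y :: x :: l.eraseIdx t) = G (x :: y :: l.eraseIdx t) :=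
      fun t => hG _ _ (List.Perm.swap x y _)
    simp only [List.length_cons, Finset.sum_range_succ', List.eraseIdx_cons_succ,
      List.eraseIdx_cons_zero, h1]
    ring
  | trans h1 h2 ih1 ih2 =>
    intro G hG
    rw [ih1 G hG, ih2 G hG]

lemma sum_zmod2_gen (x y : ZMod 2) : x + y + x = y := by
  have : x + x = 0 := by fin_cases x <;> decide
  calc x + y + x = (x + x) + y := by ring
  _ = y := by rw [this, zero_add]

lemma sum_zmod2_gen2 (x y : ZMod 2) : x + y + y = x := by
  have : y + y = 0 := by fin_cases y <;> decide
  calc x + y + y = x + (y + y) := by ring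
  _ = x := by rw [this, add_zero]

/-- The local (door-counting parity) lemma, for sorted lists. -/
lemma local_sorted : ∀ (L : List ℤ), L.Pairwise (fun a b => |a| ≤ |b|) → (∀ a ∈ L, a ≠ 0) →
    (∀ a ∈ L, ∀ b ∈ L, |a| = |b| → a = b) → ∀ s : ℤ, (s = 1 ∨ s = -1) →
    (∑ t ∈ Finset.range L.length, ind (AltP s (L.eraseIdx t))) =
      ind (AltP s L) + ind (AltP (-s) L) := by
  intro L
  induction L with
  | nil =>
    intro _ _ _ s _
    simp [ind_of _ (altP_nil s), ind_of _ (altP_nil (-s))]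
    decide
  | cons a l ih =>
    intro hsort h0 hties s hs
    have hmin : ∀ b ∈ l, |a| ≤ |b| := (List.pairwise_cons.mp hsort).1
    have hsort' : l.Pairwise (fun a b => |a| ≤ |b|) := (List.pairwise_cons.mp hsort).2
    have ha0 : a ≠ 0 := h0 a (by simp)
    have hcl : 1 ≤ List.count a l → 1 < List.count a (a :: l) := by
      rw [List.count_cons_self]; omega
    by_cases hal : a ∈ l
    · -- duplicate case: move both copies to the front and everything vanishes
      have hperm : (a :: l).Perm (a :: a :: l.erase a) :=
        (List.perm_cons_erase hal).cons a
      rw [doorsum_perm hperm (fun l => ind (AltP s l))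
        (fun l l' hp => ind_congr (altP_perm hp))]
      have hc1 : 0 < List.count a l := List.count_pos_iff.mpr hal
      rw [ind_of_not _ (altP_not_of_count (a := a) (hcl hc1)),
        ind_of_not _ (altP_not_of_count (a := a) (hcl hc1))]
      rw [List.length_cons, List.length_cons, Finset.sum_range_succ', Finset.sum_range_succ']
      simp only [List.eraseIdx_cons_succ, List.eraseIdx_cons_zero]
      have hz : ∀ t, ind (AltP s (a :: a :: (l.erase a).eraseIdx t)) = 0 := by
        intro t
        refine ind_of_not _ (altP_not_of_count (a := a) ?_)
        rw [List.count_cons_self, List.count_cons_self]; omega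
      rw [Finset.sum_congr rfl (fun t _ => hz t)]
      simp [ind_add_self]
    · -- `a` is the strict minimum
      have hstrictall : ∀ b ∈ l, |a| < |b| := by
        intro b hb
        rcases lt_or_eq_of_le (hmin b hb) with h | h
        · exact h
        · exact absurd (hties a (by simp) b (by simp [hb]) h) (fun he => hal (he ▸ hb))
      have hstrict_t : ∀ t : ℕ, ∀ b ∈ l.eraseIdx t, |a| < |b| := by
        intro t b hb
        exact hstrictall b ((l.eraseIdx_sublist t).mem hb)
      have hsa : s * a ≠ 0 := by
        rcases hs with rfl | rfl <;> simpa using ha0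
      rw [List.length_cons, Finset.sum_range_succ']
      simp only [List.eraseIdx_cons_succ, List.eraseIdx_cons_zero]
      have hterm : ∀ t : ℕ, ind (AltP s (a :: l.eraseIdx t)) =
          ind (0 < s * a) * ind (AltP (-s) (l.eraseIdx t)) := by
        intro t
        rw [ind_congr (altP_cons (fun b hb => le_of_lt (hstrict_t t b hb)))]
        rw [ind_congr (show (0 < s * a ∧ (∀ b ∈ l.eraseIdx t, |a| < |b|) ∧
            AltP (-s) (l.eraseIdx t)) ↔ (0 < s * a ∧ AltP (-s) (l.eraseIdx t)) by
          constructor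
          · rintro ⟨h1, _, h3⟩; exact ⟨h1, h3⟩
          · rintro ⟨h1, h3⟩; exact ⟨h1, hstrict_t t, h3⟩)]
        exact ind_and _ _
      rw [Finset.sum_congr rfl (fun t _ => hterm t), ← Finset.mul_sum]
      have hconsL : AltP s (a :: l) ↔ (0 < s * a ∧ AltP (-s) l) := by
        rw [altP_cons hmin]
        constructor
        · rintro ⟨h1, _, h3⟩; exact ⟨h1, h3⟩
        · rintro ⟨h1, h3⟩; exact ⟨h1, hstrictall, h3⟩
      have hconsR : AltP (-s) (a :: l) ↔ (0 < -s * a ∧ AltP s l) := by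
        rw [altP_cons hmin, neg_neg]
        constructor
        · rintro ⟨h1, _, h3⟩; exact ⟨h1, h3⟩
        · rintro ⟨h1, h3⟩; exact ⟨h1, hstrictall, h3⟩
      have h0' : ∀ b ∈ l, b ≠ 0 := fun b hb => h0 b (by simp [hb])
      have hties' : ∀ b ∈ l, ∀ c ∈ l, |b| = |c| → b = c :=
        fun b hb c hc => hties b (by simp [hb]) c (by simp [hc])
      by_cases hpos : 0 < s * a
      · have hsum : (∑ i ∈ Finset.range l.length, ind (AltP (-s) (l.eraseIdx i))) =
            ind (AltP (-s) l) + ind (AltP s l) := by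
          have := ih hsort' h0' hties' (-s) (by rcases hs with rfl | rfl <;> norm_num)
          rwa [neg_neg] at this
        have hnpos : ¬ (0 < -s * a) := by intro hc; nlinarith
        rw [ind_of _ hpos, one_mul, hsum, ind_congr hconsL, ind_congr hconsR,
          ind_congr (and_iff_right hpos),
          ind_of_not _ (show ¬ (0 < -s * a ∧ AltP s l) from fun hc => hnpos hc.1),
          add_zero]
        exact sum_zmod2_gen2 _ _
      · have hpos' : 0 < -s * a := by
          rcases lt_trichotomy (s * a) 0 with h | h | h
          · nlinarith
          · exact absurd h hsa
          · exact absurd h hpos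
        rw [ind_of_not _ hpos, zero_mul, zero_add, ind_congr hconsL, ind_congr hconsR,
          ind_of_not _ (show ¬ (0 < s * a ∧ AltP (-s) l) from fun hc => hpos hc.1),
          ind_congr (and_iff_right hpos'), zero_add]

end KneserAux

namespace KneserAux

/-- The local (door-counting parity) lemma, general form. -/
lemma local_main (L : List ℤ) (h0 : ∀ a ∈ L, a ≠ 0)
    (hties : ∀ a ∈ L, ∀ b ∈ L, |a| = |b| → a = b) :
    (∑ t ∈ Finset.range L.length, ind (AltP 1 (L.eraseIdx t))) =
      ind (AltP 1 L) + ind (AltP (-1) L) := by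
  classical
  haveI : Std.Total (fun a b : ℤ => |a| ≤ |b|) := ⟨fun a b => le_total _ _⟩
  haveI : IsTrans ℤ (fun a b : ℤ => |a| ≤ |b|) := ⟨fun a b c hab hbc => le_trans hab hbc⟩
  have hperm : L.Perm (L.insertionSort (fun a b : ℤ => |a| ≤ |b|)) :=
    (List.perm_insertionSort _ L).symm
  rw [doorsum_perm hperm (fun l => ind (AltP 1 l)) (fun l l' hp => ind_congr (altP_perm hp))]
  rw [local_sorted _ (List.pairwise_insertionSort _ L) (fun a ha => h0 a (hperm.mem_iff.mpr ha))
      (fun a ha b hb => hties a (hperm.mem_iff.mpr ha) b (hperm.mem_iff.mpr hb)) 1 (Or.inl rfl)]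
  rw [show ind (AltP 1 L) = ind (AltP 1 (L.insertionSort (fun a b : ℤ => |a| ≤ |b|))) from
      ind_congr (altP_perm hperm),
    show ind (AltP (-1) L) = ind (AltP (-1) (L.insertionSort (fun a b : ℤ => |a| ≤ |b|))) from
      ind_congr (altP_perm hperm)]

end KneserAux

namespace KneserAux

section Global

variable {n : ℕ} (lam : (Fin n → ℤ) → ℤ)

/-- The `t`-th element (prefix of size `t`) of the flag encoded by `f`. -/
def vec {j : ℕ} (f : Fin j → Fin n × Bool) (t : ℕ) : Fin n → ℤ :=
  fun i => ∑ s : Fin j,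
    if s.val < t ∧ (f s).1 = i then (if (f s).2 then (1 : ℤ) else -1) else 0

/-- A valid flag encoding at level `j`. -/
def good {j : ℕ} (f : Fin j → Fin n × Bool) : Prop :=
  Function.Injective (fun s => (f s).1) ∧ ∀ s, ((f s).1 : ℕ) < j

/-- The labels along the flag. -/
def labs {j : ℕ} (f : Fin j → Fin n × Bool) : List ℤ :=
  (List.range j).map (fun t => lam (vec f (t + 1)))

open Classical in
noncomputable def alpha (j : ℕ) : ZMod 2 :=
  ∑ f ∈ Finset.univ.filter (fun f : Fin j → Fin n × Bool => good f),
    ind (AltP 1 (labs lam f))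

lemma vec_apply_fst {j : ℕ} {f : Fin j → Fin n × Bool} (hf : good f) (t : ℕ) (s : Fin j) :
    vec f t ((f s).1) = if s.val < t then (if (f s).2 then (1 : ℤ) else -1) else 0 := by
  unfold vec
  rw [Finset.sum_eq_single s]
  · simp
  · intro s' _ hne
    have : (f s').1 ≠ (f s).1 := fun h => hne (hf.1 h)
    simp [this]
  · simp

lemma vec_nonzero {j : ℕ} {f : Fin j → Fin n × Bool} (hf : good f) {t : ℕ}
    (ht1 : 1 ≤ t) (htj : t ≤ j) : vec f t ≠ 0 := by
  have hj : 0 < j := lt_of_lt_of_le ht1 htj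
  set s0 : Fin j := ⟨0, hj⟩
  intro h
  have := congrFun h ((f s0).1)
  rw [vec_apply_fst hf] at this
  simp only [Pi.zero_apply] at this
  rw [if_pos (show (s0 : ℕ) < t by show 0 < t; omega)] at this
  rcases Bool.eq_false_or_eq_true (f s0).2 with hb | hb <;> rw [hb] at this <;> simp at this

lemma vec_chain {j : ℕ} {f : Fin j → Fin n × Bool} (hf : good f) {t₁ t₂ : ℕ}
    (h : t₁ ≤ t₂) : ∀ i, vec f t₁ i = 0 ∨ vec f t₁ i = vec f t₂ i := by
  intro i
  by_cases hex : ∃ s : Fin j, s.val < t₁ ∧ (f s).1 = i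
  · obtain ⟨s, hs1, hs2⟩ := hex
    subst hs2
    right
    rw [vec_apply_fst hf, vec_apply_fst hf, if_pos hs1, if_pos (lt_of_lt_of_le hs1 h)]
  · left
    unfold vec
    push_neg at hex
    apply Finset.sum_eq_zero
    intro s _
    rw [if_neg]
    rintro ⟨h1, h2⟩
    exact absurd h2 (hex s h1)

lemma labs_length {j : ℕ} (f : Fin j → Fin n × Bool) : (labs lam f).length = j := by
  simp [labs]

lemma labs_getElem {j : ℕ} (f : Fin j → Fin n × Bool) (u : ℕ) (hu : u < j) :
    (labs lam f)[u]'(by rw [labs_length]; exact hu) = lam (vec f (u + 1)) := by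
  simp [labs]

lemma labs_mem {j : ℕ} {f : Fin j → Fin n × Bool} {a : ℤ} (ha : a ∈ labs lam f) :
    ∃ t : ℕ, t < j ∧ a = lam (vec f (t + 1)) := by
  obtain ⟨t, ht, rfl⟩ := List.mem_map.mp ha
  exact ⟨t, List.mem_range.mp ht, rfl⟩

section Hyps

variable (hcomp : ∀ x y : Fin n → ℤ, x ≠ 0 → (∀ i, x i = 0 ∨ x i = y i) → lam x ≠ -lam y)

include hcomp in
lemma lam_ne_zero {x : Fin n → ℤ} (hx : x ≠ 0) : lam x ≠ 0 := by
  intro h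
  exact hcomp x x hx (fun i => Or.inr rfl) (by rw [h]; ring)

include hcomp in
lemma labs_nonzero {j : ℕ} {f : Fin j → Fin n × Bool} (hf : good f) :
    ∀ a ∈ labs lam f, a ≠ 0 := by
  intro a ha
  obtain ⟨t, ht, rfl⟩ := labs_mem lam ha
  exact lam_ne_zero lam hcomp (vec_nonzero hf (by omega) (by omega))

include hcomp in
lemma labs_ties {j : ℕ} {f : Fin j → Fin n × Bool} (hf : good f) :
    ∀ a ∈ labs lam f, ∀ b ∈ labs lam f, |a| = |b| → a = b := by
  have key : ∀ t₁ t₂ : ℕ, t₁ ≤ t₂ → t₂ < j →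
      |lam (vec f (t₁ + 1))| = |lam (vec f (t₂ + 1))| →
      lam (vec f (t₁ + 1)) = lam (vec f (t₂ + 1)) := by
    intro t₁ t₂ h12 h2 habs
    rcases abs_eq_abs.mp habs with h | h
    · exact h
    · exact absurd h (hcomp _ _ (vec_nonzero hf (by omega) (by omega))
        (vec_chain hf (by omega)))
  intro a ha b hb hab
  obtain ⟨t₁, ht₁, rfl⟩ := labs_mem lam ha
  obtain ⟨t₂, ht₂, rfl⟩ := labs_mem lam hb
  rcases le_total t₁ t₂ with h | h
  · exact key t₁ t₂ h ht₂ hab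
  · exact (key t₂ t₁ h ht₁ hab.symm).symm

end Hyps

end Global

end KneserAux

namespace KneserAux

open Classical

section Global2

variable {n : ℕ} (lam : (Fin n → ℤ) → ℤ)

lemma good_exists_coord {j : ℕ} {f : Fin j → Fin n × Bool} (hf : good f) (i : Fin n)
    (hi : i.val < j) : ∃ s, (f s).1 = i := by
  have hinj : Function.Injective (fun s : Fin j => (⟨(f s).1.val, hf.2 s⟩ : Fin j)) := by
    intro a b hab
    apply hf.1
    simp only [Fin.mk.injEq] at hab
    exact Fin.ext hab
  have hsurj := Finite.surjective_of_injective hinj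
  obtain ⟨s, hs⟩ := hsurj ⟨i.val, hi⟩
  simp only [Fin.mk.injEq] at hs
  exact ⟨s, Fin.ext hs⟩

/-- Flip all signs of a flag. -/
def flipAll {j : ℕ} (f : Fin j → Fin n × Bool) : Fin j → Fin n × Bool :=
  fun s => ((f s).1, !(f s).2)

lemma good_flipAll {j : ℕ} {f : Fin j → Fin n × Bool} : good (flipAll f) ↔ good f := Iff.rfl

lemma flipAll_flipAll {j : ℕ} (f : Fin j → Fin n × Bool) : flipAll (flipAll f) = f := by
  funext s; simp [flipAll]

lemma vec_flipAll {j : ℕ} (f : Fin j → Fin n × Bool) (t : ℕ) :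
    vec (flipAll f) t = -(vec f t) := by
  funext i
  show _ = -(vec f t i)
  unfold vec flipAll
  rw [← Finset.sum_neg_distrib]
  apply Finset.sum_congr rfl
  intro s _
  by_cases h : s.val < t ∧ (f s).1 = i
  · rw [if_pos h, if_pos h]
    cases (f s).2 <;> simp
  · rw [if_neg h, if_neg h, neg_zero]

variable (hanti : ∀ x : Fin n → ℤ, x ≠ 0 → lam (-x) = -lam x)

include hanti in
lemma labs_flipAll {j : ℕ} {f : Fin j → Fin n × Bool} (hf : good f) :
    labs lam (flipAll f) = (labs lam f).map (fun a => -a) := by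
  unfold labs
  rw [List.map_map]
  apply List.map_congr_left
  intro t ht
  have htj : t < j := List.mem_range.mp ht
  show lam (vec (flipAll f) (t + 1)) = - lam (vec f (t + 1))
  rw [vec_flipAll]
  exact hanti _ (vec_nonzero hf (by omega) (by omega))

/-- Hemisphere condition: all steps using coordinate `jc` are positive. -/
def ucond {j : ℕ} (jc : Fin n) (f : Fin j → Fin n × Bool) : Prop :=
  ∀ s, (f s).1 = jc → (f s).2 = true

include hanti in
lemma sum_W_eq {j : ℕ} (jc : Fin n) (hjc : jc.val < j) :
    (∑ f ∈ Finset.univ.filter (fun f : Fin j → Fin n × Bool => good f ∧ ¬ ucond jc f),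
      ind (AltP 1 (labs lam f)))
    = ∑ f ∈ Finset.univ.filter (fun f : Fin j → Fin n × Bool => good f ∧ ucond jc f),
      ind (AltP (-1) (labs lam f)) := by
  apply Finset.sum_nbij' (i := flipAll) (j := flipAll)
  · intro f hf
    rw [Finset.mem_filter] at hf ⊢
    obtain ⟨_, hg, hnu⟩ := hf
    refine ⟨Finset.mem_univ _, good_flipAll.mpr hg, ?_⟩
    intro s hs
    have hsf : (f s).1 = jc := hs
    obtain ⟨s₀, hs₀, hb₀⟩ : ∃ s, (f s).1 = jc ∧ ¬ (f s).2 = true := by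
      simpa only [ucond, not_forall, exists_prop] using hnu
    have heq : s = s₀ := hg.1 (show (f s).1 = (f s₀).1 by rw [hsf, hs₀])
    subst heq
    show (!(f s).2) = true
    cases hb : (f s).2
    · simp
    · exact absurd hb hb₀
  · intro f hf
    rw [Finset.mem_filter] at hf ⊢
    obtain ⟨_, hg, hu⟩ := hf
    refine ⟨Finset.mem_univ _, good_flipAll.mpr hg, ?_⟩
    intro hu'
    obtain ⟨s₀, hs₀⟩ := good_exists_coord hg jc hjc
    have h1 : (f s₀).2 = true := hu s₀ hs₀
    have h2 := hu' s₀ (show (flipAll f s₀).1 = jc from hs₀)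
    show False
    have h3 : (!(f s₀).2) = true := h2
    rw [h1] at h3
    simp at h3
  · intro f _; exact flipAll_flipAll f
  · intro f _; exact flipAll_flipAll f
  · intro f hf
    rw [Finset.mem_filter] at hf
    rw [labs_flipAll lam hanti hf.2.1]
    exact (ind_congr (by rw [← altP_neg]; norm_num)).symm

end Global2

end KneserAux

namespace KneserAux

open Classical

section Global3

variable {n : ℕ} (lam : (Fin n → ℤ) → ℤ)

lemma eraseIdx_ext {L L' : List ℤ} (hlen : L.length = L'.length) (t : ℕ) (ht : t < L.length)
    (h : ∀ u (hu : u < L.length), u ≠ t → L[u] = L'[u]'(hlen ▸ hu)) :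
    L.eraseIdx t = L'.eraseIdx t := by
  apply List.ext_getElem
  · rw [List.length_eraseIdx_of_lt ht, List.length_eraseIdx_of_lt (hlen ▸ ht), hlen]
  · intro u h1 h2
    have hult : u < L.length - 1 := by rwa [List.length_eraseIdx_of_lt ht] at h1
    by_cases hcase : u < t
    · rw [List.getElem_eraseIdx_of_lt h1 hcase,
        List.getElem_eraseIdx_of_lt h2 hcase]
      exact h u (by omega) (by omega)
    · rw [List.getElem_eraseIdx_of_ge h1 (by omega),
        List.getElem_eraseIdx_of_ge h2 (by omega)]
      exact h (u+1) (by omega) (by omega)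

lemma vec_comp_perm {j : ℕ} (f : Fin j → Fin n × Bool) (σ : Equiv.Perm (Fin j)) (t : ℕ)
    (hσ : ∀ s, (σ s).val < t ↔ s.val < t) : vec (f ∘ σ) t = vec f t := by
  funext i
  show (∑ s : Fin j, if s.val < t ∧ (f (σ s)).1 = i
      then (if (f (σ s)).2 then (1:ℤ) else -1) else 0) = _
  rw [show (vec f t i) = ∑ s : Fin j, (fun s' => if s'.val < t ∧ (f s').1 = i
      then (if (f s').2 then (1:ℤ) else -1) else 0) s from rfl]
  rw [← Equiv.sum_comp σ (fun s' => if s'.val < t ∧ (f s').1 = i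
      then (if (f s').2 then (1:ℤ) else -1) else 0)]
  apply Finset.sum_congr rfl
  intro s _
  exact if_congr (and_congr_left' (hσ s).symm) rfl rfl

lemma swap_val_iff {m : ℕ} (a b : Fin m) (u : ℕ) (hab : (a.val < u ↔ b.val < u)) (s : Fin m) :
    ((Equiv.swap a b) s).val < u ↔ s.val < u := by
  rcases eq_or_ne s a with rfl | hsa
  · rw [Equiv.swap_apply_left]; exact hab.symm
  rcases eq_or_ne s b with rfl | hsb
  · rw [Equiv.swap_apply_right]; exact hab
  · rw [Equiv.swap_apply_of_ne_of_ne hsa hsb]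

lemma labs_swap_eraseIdx {j : ℕ} (f : Fin (j+1) → Fin n × Bool) (t : ℕ) (ht : t < j) :
    (labs lam (f ∘ (Equiv.swap (⟨t, by omega⟩ : Fin (j+1)) ⟨t+1, by omega⟩))).eraseIdx t
      = (labs lam f).eraseIdx t := by
  apply eraseIdx_ext (by rw [labs_length, labs_length]) t (by rw [labs_length]; omega)
  intro u hu hut
  rw [labs_length] at hu
  rw [labs_getElem lam _ u hu, labs_getElem lam f u hu]
  rw [vec_comp_perm f _ (u+1) (fun s => swap_val_iff _ _ (u+1)
    (show t < u + 1 ↔ t + 1 < u + 1 by omega) s)]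

/-- Flip the sign of the top step. -/
def flipTop {j : ℕ} (f : Fin (j+1) → Fin n × Bool) : Fin (j+1) → Fin n × Bool :=
  Function.update f (Fin.last j) ((f (Fin.last j)).1, !(f (Fin.last j)).2)

lemma flipTop_fst {j : ℕ} (f : Fin (j+1) → Fin n × Bool) (s : Fin (j+1)) :
    ((flipTop f) s).1 = (f s).1 := by
  rcases eq_or_ne s (Fin.last j) with rfl | hs
  · simp [flipTop]
  · simp [flipTop, Function.update_of_ne hs]

lemma flipTop_snd_last {j : ℕ} (f : Fin (j+1) → Fin n × Bool) :
    ((flipTop f) (Fin.last j)).2 = !(f (Fin.last j)).2 := by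
  simp [flipTop]

lemma flipTop_apply_ne {j : ℕ} (f : Fin (j+1) → Fin n × Bool) {s : Fin (j+1)}
    (hs : s ≠ Fin.last j) : (flipTop f) s = f s := by
  simp [flipTop, Function.update_of_ne hs]

lemma flipTop_flipTop {j : ℕ} (f : Fin (j+1) → Fin n × Bool) : flipTop (flipTop f) = f := by
  funext s
  rcases eq_or_ne s (Fin.last j) with rfl | hs
  · apply Prod.ext
    · rw [flipTop_fst, flipTop_fst]
    · show ((flipTop (flipTop f)) (Fin.last j)).2 = (f (Fin.last j)).2
      rw [flipTop_snd_last, flipTop_snd_last, Bool.not_not]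
  · rw [flipTop_apply_ne _ hs, flipTop_apply_ne _ hs]

lemma good_flipTop {j : ℕ} (f : Fin (j+1) → Fin n × Bool) : good (flipTop f) ↔ good f := by
  unfold good
  rw [show (fun s => ((flipTop f) s).1) = (fun s => (f s).1) from funext (flipTop_fst f)]
  constructor
  · rintro ⟨h1, h2⟩
    exact ⟨h1, fun s => by rw [← flipTop_fst]; exact h2 s⟩
  · rintro ⟨h1, h2⟩
    exact ⟨h1, fun s => by rw [flipTop_fst]; exact h2 s⟩

lemma vec_flipTop {j : ℕ} (f : Fin (j+1) → Fin n × Bool) (t : ℕ) (ht : t ≤ j) :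
    vec (flipTop f) t = vec f t := by
  funext i
  unfold vec
  apply Finset.sum_congr rfl
  intro s _
  rcases eq_or_ne s (Fin.last j) with rfl | hs
  · have hv : ((Fin.last j : Fin (j+1)) : ℕ) = j := rfl
    rw [if_neg (by rw [hv]; omega), if_neg (by rw [hv]; omega)]
  · rw [flipTop_apply_ne _ hs]

lemma labs_flipTop_eraseIdx {j : ℕ} (f : Fin (j+1) → Fin n × Bool) :
    (labs lam (flipTop f)).eraseIdx j = (labs lam f).eraseIdx j := by
  apply eraseIdx_ext (by rw [labs_length, labs_length]) j (by rw [labs_length]; omega)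
  intro u hu hut
  rw [labs_length] at hu
  rw [labs_getElem lam _ u hu, labs_getElem lam f u hu, vec_flipTop f (u+1) (by omega)]

lemma vec_castSucc {j : ℕ} (f : Fin (j+1) → Fin n × Bool) (t : ℕ) (ht : t ≤ j) :
    vec (f ∘ Fin.castSucc) t = vec f t := by
  funext i
  unfold vec
  rw [Fin.sum_univ_castSucc]
  have hlast : (if ((Fin.last j : Fin (j+1)) : ℕ) < t ∧ (f (Fin.last j)).1 = i
      then (if (f (Fin.last j)).2 then (1:ℤ) else -1) else 0) = 0 := by
    rw [if_neg]
    rintro ⟨h1, _⟩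
    have : ((Fin.last j : Fin (j+1)) : ℕ) = j := rfl
    omega
  rw [hlast, add_zero]
  apply Finset.sum_congr rfl
  intro s _
  rfl

lemma labs_castSucc {j : ℕ} (f : Fin (j+1) → Fin n × Bool) :
    labs lam (f ∘ Fin.castSucc) = (labs lam f).eraseIdx j := by
  apply List.ext_getElem
  · rw [labs_length, List.length_eraseIdx_of_lt (by rw [labs_length]; omega), labs_length]
    omega
  · intro u h1 h2
    rw [labs_length] at h1
    rw [labs_getElem lam _ u h1,
      List.getElem_eraseIdx_of_lt h2 (by omega),
      labs_getElem lam f u (by omega), vec_castSucc f (u+1) (by omega)]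

end Global3

end KneserAux

namespace KneserAux

open Classical

section Global4

variable {n : ℕ} (lam : (Fin n → ℤ) → ℤ)
variable (hanti : ∀ x : Fin n → ℤ, x ≠ 0 → lam (-x) = -lam x)
variable (hcomp : ∀ x y : Fin n → ℤ, x ≠ 0 → (∀ i, x i = 0 ∨ x i = y i) → lam x ≠ -lam y)

lemma good_comp {j : ℕ} {f : Fin j → Fin n × Bool} (hf : good f) (σ : Equiv.Perm (Fin j)) :
    good (f ∘ σ) :=
  ⟨hf.1.comp σ.injective, fun s => hf.2 (σ s)⟩

lemma ucond_comp {j : ℕ} {jc : Fin n} {f : Fin j → Fin n × Bool} (hf : ucond jc f)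
    (σ : Equiv.Perm (Fin j)) : ucond jc (f ∘ σ) :=
  fun s hs => hf (σ s) hs

lemma ucond_flipTop {j : ℕ} {jc : Fin n} {f : Fin (j+1) → Fin n × Bool} (hf : ucond jc f)
    (hne : (f (Fin.last j)).1 ≠ jc) : ucond jc (flipTop f) := by
  intro s hs
  rw [flipTop_fst] at hs
  have hsl : s ≠ Fin.last j := fun h => hne (h ▸ hs)
  rw [flipTop_apply_ne _ hsl]
  exact hf s hs

lemma good_snoc {j : ℕ} (hj : j < n) {g : Fin j → Fin n × Bool} (hg : good g) :
    good (Fin.snoc g ((⟨j, hj⟩ : Fin n), true)) := by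
  constructor
  · intro a b hab
    rcases Fin.eq_castSucc_or_eq_last a with ⟨a', rfl⟩ | rfl <;>
      rcases Fin.eq_castSucc_or_eq_last b with ⟨b', rfl⟩ | rfl
    · simp only [Fin.snoc_castSucc] at hab
      exact congrArg Fin.castSucc (hg.1 hab)
    · simp only [Fin.snoc_castSucc, Fin.snoc_last] at hab
      have := congrArg Fin.val hab
      have hb := hg.2 a'
      simp at this
      omega
    · simp only [Fin.snoc_castSucc, Fin.snoc_last] at hab
      have := congrArg Fin.val hab
      have hb := hg.2 b'
      simp at this
      omega
    · rfl
  · intro s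
    rcases Fin.eq_castSucc_or_eq_last s with ⟨s', rfl⟩ | rfl
    · simp only [Fin.snoc_castSucc]
      have := hg.2 s'
      omega
    · simp only [Fin.snoc_last]
      omega

lemma ucond_snoc {j : ℕ} (hj : j < n) {g : Fin j → Fin n × Bool} (hg : good g) :
    ucond (⟨j, hj⟩ : Fin n) (Fin.snoc g ((⟨j, hj⟩ : Fin n), true)) := by
  intro s hs
  rcases Fin.eq_castSucc_or_eq_last s with ⟨s', rfl⟩ | rfl
  · rw [Fin.snoc_castSucc] at hs
    have := congrArg Fin.val hs
    have hb := hg.2 s'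
    simp at this
    omega
  · rw [Fin.snoc_last]

include hanti hcomp in
lemma alpha_step (j : ℕ) (hj : j < n) : alpha (n := n) lam (j+1) = alpha lam j := by
  classical
  have hjcv : ((⟨j, hj⟩ : Fin n) : ℕ) = j := rfl
  set jc : Fin n := ⟨j, hj⟩ with hjcdef
  -- Step A : restrict to the upper hemisphere
  have hA : alpha lam (j+1) =
      ∑ f ∈ Finset.univ.filter (fun f : Fin (j+1) → Fin n × Bool => good f ∧ ucond jc f),
        (ind (AltP 1 (labs lam f)) + ind (AltP (-1) (labs lam f))) := by
    unfold alpha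
    rw [← Finset.sum_filter_add_sum_filter_not
      (Finset.univ.filter (fun f : Fin (j+1) → Fin n × Bool => good f))
      (fun f => ucond jc f), Finset.filter_filter, Finset.filter_filter]
    rw [sum_W_eq lam hanti jc (by omega), ← Finset.sum_add_distrib]
  -- Step B : local lemma (door counting)
  have hB : ∀ f ∈ Finset.univ.filter (fun f : Fin (j+1) → Fin n × Bool => good f ∧ ucond jc f),
      ind (AltP 1 (labs lam f)) + ind (AltP (-1) (labs lam f))
        = ∑ t ∈ Finset.range (j+1), ind (AltP 1 ((labs lam f).eraseIdx t)) := by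
    intro f hf
    rw [Finset.mem_filter] at hf
    have hg := hf.2.1
    rw [← local_main (labs lam f) (labs_nonzero lam hcomp hg) (labs_ties lam hcomp hg),
      labs_length]
  rw [hA, Finset.sum_congr rfl hB, ← Finset.sum_product']
  -- Step D : split off the boundary
  rw [← Finset.sum_filter_add_sum_filter_not
    ((Finset.univ.filter (fun f : Fin (j+1) → Fin n × Bool => good f ∧ ucond jc f))
      ×ˢ Finset.range (j+1))
    (fun a => a.2 = j ∧ (a.1 (Fin.last j)).1 = jc)]
  -- Step E : the involution kills the non-boundary part
  have hE : ∑ a ∈ (((Finset.univ.filter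
        (fun f : Fin (j+1) → Fin n × Bool => good f ∧ ucond jc f))
        ×ˢ Finset.range (j+1)).filter
        (fun a => ¬ (a.2 = j ∧ (a.1 (Fin.last j)).1 = jc))),
      ind (AltP 1 ((labs lam a.1).eraseIdx a.2)) = 0 := by
    set S := (((Finset.univ.filter
        (fun f : Fin (j+1) → Fin n × Bool => good f ∧ ucond jc f))
        ×ˢ Finset.range (j+1)).filter
        (fun a => ¬ (a.2 = j ∧ (a.1 (Fin.last j)).1 = jc))) with hS
    have hmemS : ∀ a, a ∈ S ↔ ((good a.1 ∧ ucond jc a.1) ∧ a.2 < j + 1) ∧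
        ¬ (a.2 = j ∧ (a.1 (Fin.last j)).1 = jc) := by
      intro a
      rw [hS, Finset.mem_filter, Finset.mem_product, Finset.mem_filter, Finset.mem_range]
      simp only [Finset.mem_univ, true_and]
    set gfun : ∀ a ∈ S, (Fin (j+1) → Fin n × Bool) × ℕ := fun a ha =>
      if h : a.2 < j then
        (a.1 ∘ (Equiv.swap (⟨a.2, by omega⟩ : Fin (j+1)) ⟨a.2+1, by omega⟩), a.2)
      else (flipTop a.1, a.2) with hgfun
    have hmem : ∀ a (ha : a ∈ S), gfun a ha ∈ S := by
      intro a ha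
      rw [hmemS] at ha
      obtain ⟨⟨⟨hgood, hucond⟩, htr⟩, hnP⟩ := ha
      rw [hmemS]
      by_cases h : a.2 < j
      · simp only [hgfun]; rw [dif_pos h]
        exact ⟨⟨⟨good_comp hgood _, ucond_comp hucond _⟩, htr⟩,
          fun hc => absurd hc.1 (by omega)⟩
      · simp only [hgfun]; rw [dif_neg h]
        have ht : a.2 = j := by omega
        have hne : (a.1 (Fin.last j)).1 ≠ jc := fun hc => hnP ⟨ht, hc⟩
        refine ⟨⟨⟨(good_flipTop _).mpr hgood, ucond_flipTop hucond hne⟩, htr⟩, ?_⟩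
        intro hc
        rw [flipTop_fst] at hc
        exact hne hc.2
    have hval : ∀ a (ha : a ∈ S), ind (AltP 1 ((labs lam a.1).eraseIdx a.2))
        + ind (AltP 1 ((labs lam (gfun a ha).1).eraseIdx (gfun a ha).2)) = 0 := by
      intro a ha
      rw [hmemS] at ha
      by_cases h : a.2 < j
      · simp only [hgfun]; rw [dif_pos h]
        show _ + ind (AltP 1 ((labs lam (a.1 ∘ _)).eraseIdx a.2)) = 0
        rw [labs_swap_eraseIdx lam a.1 a.2 h]
        exact ind_add_self _
      · have ht : a.2 = j := by omega
        simp only [hgfun]; rw [dif_neg h]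
        show _ + ind (AltP 1 ((labs lam (flipTop a.1)).eraseIdx a.2)) = 0
        rw [ht, labs_flipTop_eraseIdx]
        exact ind_add_self _
    have hne : ∀ a (ha : a ∈ S), ind (AltP 1 ((labs lam a.1).eraseIdx a.2)) ≠ 0 →
        gfun a ha ≠ a := by
      intro a ha _
      rw [hmemS] at ha
      have hgood : good a.1 := ha.1.1.1
      by_cases h : a.2 < j
      · simp only [hgfun]; rw [dif_pos h]
        intro hc
        have hfe : a.1 ∘ (Equiv.swap (⟨a.2, by omega⟩ : Fin (j+1)) ⟨a.2+1, by omega⟩) = a.1 :=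
          congrArg Prod.fst hc
        have h1 : a.1 ⟨a.2+1, by omega⟩ = a.1 ⟨a.2, by omega⟩ := by
          conv_rhs => rw [← hfe]
          show _ = a.1 (Equiv.swap (⟨a.2, by omega⟩ : Fin (j+1)) ⟨a.2+1, by omega⟩
            ⟨a.2, by omega⟩)
          rw [Equiv.swap_apply_left]
        have h2 := hgood.1 (congrArg Prod.fst h1)
        have := congrArg Fin.val h2
        simp at this
      · simp only [hgfun]; rw [dif_neg h]
        intro hc
        have hfe : flipTop a.1 = a.1 := congrArg Prod.fst hc
        have h1 := congrArg (fun f => (f (Fin.last j)).2) hfe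
        rw [flipTop_snd_last] at h1
        exact Bool.not_ne_self _ h1
    have hinv : ∀ a (ha : a ∈ S), gfun (gfun a ha) (hmem a ha) = a := by
      intro a ha
      by_cases h : a.2 < j
      · have h2 : (gfun a ha).2 = a.2 := by simp only [hgfun]; rw [dif_pos h]
        have h1 : (gfun a ha).1 = a.1 ∘ (Equiv.swap (⟨a.2, by omega⟩ : Fin (j+1))
            ⟨a.2+1, by omega⟩) := by simp only [hgfun]; rw [dif_pos h]
        simp only [hgfun]
        rw [dif_pos (show (gfun a ha).2 < j from h2 ▸ h)]
        apply Prod.ext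
        · show (gfun a ha).1 ∘ _ = a.1
          funext s
          have hswapeq : (Equiv.swap (⟨(gfun a ha).2, by omega⟩ : Fin (j+1))
              ⟨(gfun a ha).2+1, by omega⟩) = (Equiv.swap (⟨a.2, by omega⟩ : Fin (j+1))
              ⟨a.2+1, by omega⟩) := by
            congr 1
            · exact Fin.ext h2
            · exact Fin.ext (congrArg (· + 1) h2)
          rw [hswapeq, h1]
          show a.1 (Equiv.swap _ _ (Equiv.swap _ _ s)) = a.1 s
          rw [Equiv.swap_apply_self]
        · show (gfun a ha).2 = a.2
          exact h2
      · have h2 : (gfun a ha).2 = a.2 := by simp only [hgfun]; rw [dif_neg h]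
        have h1 : (gfun a ha).1 = flipTop a.1 := by simp only [hgfun]; rw [dif_neg h]
        simp only [hgfun]
        rw [dif_neg (show ¬ (gfun a ha).2 < j from h2 ▸ h)]
        apply Prod.ext
        · show flipTop (gfun a ha).1 = a.1
          rw [h1, flipTop_flipTop]
        · exact h2
    exact Finset.sum_involution gfun hval hne hmem hinv
  rw [hE, add_zero]
  -- Step F : the boundary part is `alpha j`
  apply Finset.sum_nbij' (i := fun a => a.1 ∘ Fin.castSucc)
    (j := fun g => (Fin.snoc g (jc, true), j))
  · intro a ha
    simp only [Finset.mem_filter, Finset.mem_product, Finset.mem_range,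
      Finset.mem_univ, true_and] at ha ⊢
    obtain ⟨⟨⟨hgood, hucond⟩, htr⟩, ht, hlast⟩ := ha
    constructor
    · exact hgood.1.comp (Fin.castSucc_injective _)
    · intro s
      show ((a.1 (Fin.castSucc s)).1 : ℕ) < j
      have h1 := hgood.2 (Fin.castSucc s)
      have h2 : (a.1 (Fin.castSucc s)).1 ≠ jc := by
        intro hc
        have he := hgood.1 (show (a.1 (Fin.castSucc s)).1 = (a.1 (Fin.last j)).1 by
          rw [hc, hlast])
        have := congrArg Fin.val he
        simp [Fin.val_last] at this
        omega
      have h3 : ((a.1 (Fin.castSucc s)).1 : ℕ) ≠ j := by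
        intro hc
        exact h2 (Fin.ext (by rw [hc, hjcv]))
      omega
  · intro g hg
    simp only [Finset.mem_filter, Finset.mem_univ, true_and] at hg
    exact Finset.mem_filter.mpr ⟨Finset.mem_product.mpr
      ⟨Finset.mem_filter.mpr ⟨Finset.mem_univ _, good_snoc hj hg, ucond_snoc hj hg⟩,
        Finset.mem_range.mpr (by omega)⟩, rfl, by
          show ((Fin.snoc g (jc, true) : Fin (j+1) → Fin n × Bool) (Fin.last j)).1 = jc
          rw [Fin.snoc_last]⟩
  · intro a ha
    simp only [Finset.mem_filter, Finset.mem_product, Finset.mem_range,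
      Finset.mem_univ, true_and] at ha
    obtain ⟨⟨⟨hgood, hucond⟩, htr⟩, ht, hlast⟩ := ha
    have hflast : a.1 (Fin.last j) = (jc, true) := by
      apply Prod.ext
      · exact hlast
      · exact hucond (Fin.last j) hlast
    apply Prod.ext
    · show Fin.snoc (a.1 ∘ Fin.castSucc) (jc, true) = a.1
      rw [← hflast]
      exact Fin.snoc_init_self a.1
    · exact ht.symm
  · intro g hg
    funext s
    show (Fin.snoc g (jc, true) : Fin (j+1) → Fin n × Bool) (Fin.castSucc s) = g s
    simp [Fin.snoc_castSucc]
  · intro a ha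
    simp only [Finset.mem_filter, Finset.mem_product, Finset.mem_range,
      Finset.mem_univ, true_and] at ha
    obtain ⟨⟨⟨hgood, hucond⟩, htr⟩, ht, hlast⟩ := ha
    rw [labs_castSucc, ht]

end Global4

end KneserAux

namespace KneserAux

open Classical

lemma alpha_zero {n : ℕ} (lam : (Fin n → ℤ) → ℤ) : alpha (n := n) lam 0 = 1 := by
  unfold alpha
  have huniv : (Finset.univ.filter (fun f : Fin 0 → Fin n × Bool => good f)) = Finset.univ := by
    apply Finset.filter_true_of_mem
    intro f _
    exact ⟨fun a b h => a.elim0, fun s => s.elim0⟩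
  rw [huniv]
  haveI : Unique (Fin 0 → Fin n × Bool) :=
    ⟨⟨fun s => s.elim0⟩, fun f => funext fun s => s.elim0⟩
  rw [Finset.univ_unique, Finset.sum_singleton]
  have hl : labs lam (default : Fin 0 → Fin n × Bool) = [] := by simp [labs]
  rw [hl, ind_of _ (altP_nil 1)]

/-- Fan's combinatorial lemma / octahedral Tucker lemma: an antipodal labelling of the
nonzero sign vectors with no "complementary edge" must use a label of absolute value `≥ n`. -/
theorem fan {n : ℕ} (hn : 1 ≤ n) (lam : (Fin n → ℤ) → ℤ)
    (hanti : ∀ x : Fin n → ℤ, x ≠ 0 → lam (-x) = -lam x)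
    (hcomp : ∀ x y : Fin n → ℤ, x ≠ 0 → (∀ i, x i = 0 ∨ x i = y i) → lam x ≠ -lam y) :
    ∃ x : Fin n → ℤ, x ≠ 0 ∧ (n : ℤ) ≤ |lam x| := by
  have halpha : ∀ j, j ≤ n → alpha (n := n) lam j = 1 := by
    intro j
    induction j with
    | zero => intro _; exact alpha_zero lam
    | succ j ih =>
      intro hj
      rw [alpha_step lam hanti hcomp j (by omega)]
      exact ih (by omega)
  have h1 : alpha (n := n) lam n = 1 := halpha n le_rfl
  unfold alpha at h1
  have h2 : ∃ f ∈ Finset.univ.filter (fun f : Fin n → Fin n × Bool => good f),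
      ind (AltP 1 (labs lam f)) ≠ 0 :=
    Finset.exists_ne_zero_of_sum_ne_zero (by rw [h1]; exact one_ne_zero)
  obtain ⟨f, hfmem, hind⟩ := h2
  have hg : good f := (Finset.mem_filter.mp hfmem).2
  have hA : AltP 1 (labs lam f) := by
    by_contra hc
    exact hind (ind_of_not _ hc)
  obtain ⟨l, hperm, halt⟩ := hA
  have hlen : l.length = n := by rw [← hperm.length_eq, labs_length]
  have hpos : ∀ b ∈ l, (0 : ℤ) < |b| := by
    intro b hb
    have hbl : b ∈ labs lam f := hperm.mem_iff.mpr hb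
    exact abs_pos.mpr (labs_nonzero lam hcomp hg b hbl)
  rcases altL_bound halt 0 hpos with hnil | ⟨a, hal, hbound⟩
  · rw [hnil] at hlen
    simp at hlen
    omega
  · have haml : a ∈ labs lam f := hperm.mem_iff.mpr hal
    obtain ⟨t, htn, rfl⟩ := labs_mem lam haml
    refine ⟨vec f (t+1), vec_nonzero hg (by omega) (by omega), ?_⟩
    rw [hlen] at hbound
    omega

end KneserAux

namespace KneserAux

open Classical Finset

section Reduction

variable (n k : ℕ)

def Aset (x : Fin n → ℤ) : Finset (Fin n) := univ.filter (fun i => 0 < x i)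
def Bset (x : Fin n → ℤ) : Finset (Fin n) := univ.filter (fun i => x i < 0)
def sval (x : Fin n → ℤ) : ℕ := (Aset n x).card + (Bset n x).card

variable (col : Finset (Fin n) → Fin (n + 1 - 2*k))

def imCol (P : Finset (Fin n)) : Finset ℕ :=
  ((P.powersetCard k).image col).image Fin.val

noncomputable def MvK (x : Fin n → ℤ) : ℕ :=
  WithBot.unbotD 0 ((imCol n k col (Aset n x) ∪ imCol n k col (Bset n x)).max)

lemma AB_disjoint (x : Fin n → ℤ) : Disjoint (Aset n x) (Bset n x) := by
  rw [Finset.disjoint_left]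
  intro i hi1 hi2
  rw [Aset, Finset.mem_filter] at hi1
  rw [Bset, Finset.mem_filter] at hi2
  omega

lemma AB_nonempty {x : Fin n → ℤ} (hx : x ≠ 0) : (Aset n x ∪ Bset n x).Nonempty := by
  obtain ⟨i, hi⟩ := Function.ne_iff.mp hx
  refine ⟨i, ?_⟩
  rw [Finset.mem_union, Aset, Bset, Finset.mem_filter, Finset.mem_filter]
  simp only [Finset.mem_univ, true_and]
  have : x i ≠ 0 := hi
  omega

lemma sval_card_union (x : Fin n → ℤ) : sval n x = (Aset n x ∪ Bset n x).card := by
  rw [sval, Finset.card_union_of_disjoint (AB_disjoint n x)]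

lemma sval_pos {x : Fin n → ℤ} (hx : x ≠ 0) : 1 ≤ sval n x := by
  rw [sval_card_union]
  exact Finset.card_pos.mpr (AB_nonempty n hx)

lemma sval_le (x : Fin n → ℤ) : sval n x ≤ n := by
  rw [sval_card_union]
  calc (Aset n x ∪ Bset n x).card ≤ (Finset.univ : Finset (Fin n)).card :=
    Finset.card_le_card (Finset.subset_univ _)
  _ = n := by simp

lemma Aset_neg (x : Fin n → ℤ) : Aset n (-x) = Bset n x := by
  ext i
  rw [Aset, Bset, Finset.mem_filter, Finset.mem_filter]
  simp only [Pi.neg_apply, Finset.mem_univ, true_and]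
  omega

lemma Bset_neg (x : Fin n → ℤ) : Bset n (-x) = Aset n x := by
  ext i
  rw [Aset, Bset, Finset.mem_filter, Finset.mem_filter]
  simp only [Pi.neg_apply, Finset.mem_univ, true_and]
  omega

lemma sval_neg (x : Fin n → ℤ) : sval n (-x) = sval n x := by
  rw [sval, sval, Aset_neg, Bset_neg]; omega

lemma MvK_neg (x : Fin n → ℤ) : MvK n k col (-x) = MvK n k col x := by
  rw [MvK, MvK, Aset_neg, Bset_neg, Finset.union_comm]

lemma Aset_subset {x y : Fin n → ℤ} (h : ∀ i, x i = 0 ∨ x i = y i) :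
    Aset n x ⊆ Aset n y := by
  intro i hi
  rw [Aset, Finset.mem_filter] at hi ⊢
  rcases h i with h' | h'
  · omega
  · exact ⟨hi.1, h' ▸ hi.2⟩

lemma Bset_subset {x y : Fin n → ℤ} (h : ∀ i, x i = 0 ∨ x i = y i) :
    Bset n x ⊆ Bset n y := by
  intro i hi
  rw [Bset, Finset.mem_filter] at hi ⊢
  rcases h i with h' | h'
  · omega
  · exact ⟨hi.1, h' ▸ hi.2⟩

lemma imCol_mono {P Q : Finset (Fin n)} (h : P ⊆ Q) : imCol n k col P ⊆ imCol n k col Q := by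
  rw [imCol, imCol]
  exact Finset.image_subset_image (Finset.image_subset_image
    (Finset.powersetCard_mono h))

lemma mem_imCol {P : Finset (Fin n)} {c : ℕ} :
    c ∈ imCol n k col P ↔ ∃ S, S ⊆ P ∧ S.card = k ∧ (col S).val = c := by
  rw [imCol]
  simp only [Finset.mem_image, Finset.mem_powersetCard]
  constructor
  · rintro ⟨v, ⟨S, ⟨hS1, hS2⟩, rfl⟩, rfl⟩
    exact ⟨S, hS1, hS2, rfl⟩
  · rintro ⟨S, hS1, hS2, rfl⟩
    exact ⟨col S, ⟨S, ⟨hS1, hS2⟩, rfl⟩, rfl⟩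

lemma unionCol_nonempty {x : Fin n → ℤ} (hbig : 2*k - 1 ≤ sval n x) (hk : 1 ≤ k) :
    (imCol n k col (Aset n x) ∪ imCol n k col (Bset n x)).Nonempty := by
  have : k ≤ (Aset n x).card ∨ k ≤ (Bset n x).card := by
    rw [sval] at hbig; omega
  rcases this with h | h
  · obtain ⟨S, hS⟩ := Finset.powersetCard_nonempty.mpr h
    exact ⟨(col S).val, Finset.mem_union_left _ ((mem_imCol n k col).mpr
      ⟨S, (Finset.mem_powersetCard.mp hS).1, (Finset.mem_powersetCard.mp hS).2, rfl⟩)⟩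
  · obtain ⟨S, hS⟩ := Finset.powersetCard_nonempty.mpr h
    exact ⟨(col S).val, Finset.mem_union_right _ ((mem_imCol n k col).mpr
      ⟨S, (Finset.mem_powersetCard.mp hS).1, (Finset.mem_powersetCard.mp hS).2, rfl⟩)⟩

lemma MvK_mem {x : Fin n → ℤ}
    (hne : (imCol n k col (Aset n x) ∪ imCol n k col (Bset n x)).Nonempty) :
    MvK n k col x ∈ imCol n k col (Aset n x) ∪ imCol n k col (Bset n x) := by
  rw [MvK]
  have := Finset.max'_mem _ hne
  rw [← Finset.coe_max' hne]
  simpa using this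

lemma MvK_bound {x : Fin n → ℤ}
    (hne : (imCol n k col (Aset n x) ∪ imCol n k col (Bset n x)).Nonempty) :
    MvK n k col x < n + 1 - 2*k := by
  have hm := MvK_mem n k col hne
  rw [Finset.mem_union, mem_imCol, mem_imCol] at hm
  rcases hm with ⟨S, _, _, hS⟩ | ⟨S, _, _, hS⟩ <;> rw [← hS] <;> exact (col S).isLt

end Reduction

end KneserAux

namespace KneserAux

open Classical Finset

section Reduction2

variable (n k : ℕ) (col : Finset (Fin n) → Fin (n + 1 - 2*k))

noncomputable def mnK (x : Fin n → ℤ) : ℕ :=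
  WithTop.untopD 0 (((Aset n x ∪ Bset n x).image Fin.val).min)

lemma mnK_neg (x : Fin n → ℤ) : mnK n (-x) = mnK n x := by
  rw [mnK, mnK, Aset_neg, Bset_neg, Finset.union_comm]

lemma mnK_mem {x : Fin n → ℤ} (hx : x ≠ 0) :
    mnK n x ∈ (Aset n x).image Fin.val ∪ (Bset n x).image Fin.val := by
  have hne : ((Aset n x ∪ Bset n x).image Fin.val).Nonempty :=
    (AB_nonempty n hx).image _
  rw [← Finset.image_union]
  have := Finset.min'_mem _ hne
  rw [mnK, ← Finset.coe_min' hne, WithTop.untopD_coe]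
  simpa using this

lemma not_mem_both_mn {x : Fin n → ℤ} {c : ℕ}
    (h1 : c ∈ (Aset n x).image Fin.val) (h2 : c ∈ (Bset n x).image Fin.val) : False := by
  obtain ⟨i, hi, rfl⟩ := Finset.mem_image.mp h1
  obtain ⟨i', hi', he⟩ := Finset.mem_image.mp h2
  have : i' = i := Fin.val_injective he
  subst this
  exact (Finset.disjoint_left.mp (AB_disjoint n x) hi) hi' 

noncomputable def lamK (x : Fin n → ℤ) : ℤ :=
  if 2*k - 1 ≤ sval n x ∧ x ≠ 0 then
    (if MvK n k col x ∈ imCol n k col (Aset n x)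
      then ((2*k - 1 + MvK n k col x : ℕ) : ℤ)
      else -((2*k - 1 + MvK n k col x : ℕ) : ℤ))
  else
    (if mnK n x ∈ (Aset n x).image Fin.val
      then (sval n x : ℤ) else -(sval n x : ℤ))

lemma lamK_big {x : Fin n → ℤ} (hbig : 2*k - 1 ≤ sval n x) (hx : x ≠ 0) :
    lamK n k col x = (if MvK n k col x ∈ imCol n k col (Aset n x)
      then ((2*k - 1 + MvK n k col x : ℕ) : ℤ)
      else -((2*k - 1 + MvK n k col x : ℕ) : ℤ)) := by
  rw [lamK, if_pos ⟨hbig, hx⟩]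

lemma lamK_small {x : Fin n → ℤ} (hsmall : ¬ (2*k - 1 ≤ sval n x)) :
    lamK n k col x = (if mnK n x ∈ (Aset n x).image Fin.val
      then (sval n x : ℤ) else -(sval n x : ℤ)) := by
  rw [lamK, if_neg (fun hc => hsmall hc.1)]

lemma lamK_abs_big {x : Fin n → ℤ} (hbig : 2*k - 1 ≤ sval n x) (hx : x ≠ 0) :
    |lamK n k col x| = ((2*k - 1 + MvK n k col x : ℕ) : ℤ) := by
  rw [lamK_big n k col hbig hx]
  split_ifs
  · exact abs_of_nonneg (by positivity)
  · rw [abs_neg]; exact abs_of_nonneg (by positivity)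

lemma lamK_abs_small {x : Fin n → ℤ} (hsmall : ¬ (2*k - 1 ≤ sval n x)) :
    |lamK n k col x| = (sval n x : ℤ) := by
  rw [lamK_small n k col hsmall]
  split_ifs
  · exact abs_of_nonneg (by positivity)
  · rw [abs_neg]; exact abs_of_nonneg (by positivity)

variable (hk : 1 ≤ k)
variable (hcol : ∀ S T : Finset (Fin n), S.card = k → T.card = k → Disjoint S T →
    col S ≠ col T)

include hcol in
lemma Mv_not_both {x : Fin n → ℤ} {c : ℕ} (h1 : c ∈ imCol n k col (Aset n x))
    (h2 : c ∈ imCol n k col (Bset n x)) : False := by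
  obtain ⟨S, hS1, hS2, hS3⟩ := (mem_imCol n k col).mp h1
  obtain ⟨T, hT1, hT2, hT3⟩ := (mem_imCol n k col).mp h2
  have hdisj : Disjoint S T :=
    Finset.disjoint_of_subset_left hS1 (Finset.disjoint_of_subset_right hT1 (AB_disjoint n x))
  exact hcol S T hS2 hT2 hdisj (Fin.val_injective (hS3.trans hT3.symm))

include hk hcol in
lemma lamK_anti {x : Fin n → ℤ} (hx : x ≠ 0) : lamK n k col (-x) = -(lamK n k col x) := by
  have hx' : (-x : Fin n → ℤ) ≠ 0 := fun h => hx (by simpa using congrArg Neg.neg h)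
  by_cases hbig : 2*k - 1 ≤ sval n x
  · rw [lamK_big n k col (by rwa [sval_neg]) hx', lamK_big n k col hbig hx,
      MvK_neg, Aset_neg]
    have hne := unionCol_nonempty n k col hbig hk
    by_cases hA : MvK n k col x ∈ imCol n k col (Aset n x)
    · rw [if_pos hA, if_neg (fun hc => Mv_not_both n k col hcol hA hc)]
    · have hB : MvK n k col x ∈ imCol n k col (Bset n x) := by
        rcases Finset.mem_union.mp (MvK_mem n k col hne) with h | h
        · exact absurd h hA
        · exact h
      rw [if_pos hB, if_neg hA, neg_neg]
  · rw [lamK_small n k col (by rwa [sval_neg]), lamK_small n k col hbig,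
      mnK_neg, Aset_neg, sval_neg]
    by_cases hA : mnK n x ∈ (Aset n x).image Fin.val
    · rw [if_pos hA, if_neg (fun hc => not_mem_both_mn n hA hc)]
    · have hB : mnK n x ∈ (Bset n x).image Fin.val := by
        rcases Finset.mem_union.mp (mnK_mem n hx) with h | h
        · exact absurd h hA
        · exact h
      rw [if_pos hB, if_neg hA, neg_neg]

include hk hcol in
lemma lamK_comp {x y : Fin n → ℤ} (hx : x ≠ 0) (hchain : ∀ i, x i = 0 ∨ x i = y i) :
    lamK n k col x ≠ -(lamK n k col y) := by
  intro heq
  have hy : y ≠ 0 := by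
    obtain ⟨i, hi⟩ := Function.ne_iff.mp hx
    have hxi : x i ≠ 0 := hi
    rcases hchain i with h | h
    · exact absurd h hxi
    · exact fun hc => hxi (by rw [h, hc]; rfl)
  have habs : |lamK n k col x| = |lamK n k col y| := by rw [heq, abs_neg]
  have hsx1 : 1 ≤ sval n x := sval_pos n hx
  have hsy1 : 1 ≤ sval n y := sval_pos n hy
  by_cases hbx : 2*k - 1 ≤ sval n x <;> by_cases hby : 2*k - 1 ≤ sval n y
  · -- both big
    rw [lamK_abs_big n k col hbx hx, lamK_abs_big n k col hby hy] at habs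
    have hMv : MvK n k col x = MvK n k col y := by
      have := Nat.cast_inj.mp habs
      omega
    rw [lamK_big n k col hbx hx, lamK_big n k col hby hy] at heq
    by_cases hAx : MvK n k col x ∈ imCol n k col (Aset n x)
    · have hAy : MvK n k col y ∈ imCol n k col (Aset n y) := by
        rw [← hMv]
        exact imCol_mono n k col (Aset_subset n hchain) hAx
      rw [if_pos hAx, if_pos hAy, ← hMv] at heq
      omega
    · have hBx : MvK n k col x ∈ imCol n k col (Bset n x) := by
        rcases Finset.mem_union.mp (MvK_mem n k col (unionCol_nonempty n k col hbx hk))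
          with h | h
        · exact absurd h hAx
        · exact h
      have hBy : MvK n k col y ∈ imCol n k col (Bset n y) := by
        rw [← hMv]
        exact imCol_mono n k col (Bset_subset n hchain) hBx
      by_cases hAy : MvK n k col y ∈ imCol n k col (Aset n y)
      · exact Mv_not_both n k col hcol hAy hBy
      · rw [if_neg hAx, if_neg hAy, ← hMv] at heq
        omega
  · -- x big, y small : impossible
    rw [lamK_abs_big n k col hbx hx, lamK_abs_small n k col hby] at habs
    have := Nat.cast_inj.mp habs
    omega
  · -- x small, y big : impossible
    rw [lamK_abs_small n k col hbx, lamK_abs_big n k col hby hy] at habs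
    have := Nat.cast_inj.mp habs
    omega
  · -- both small
    rw [lamK_abs_small n k col hbx, lamK_abs_small n k col hby] at habs
    have hs : sval n x = sval n y := Nat.cast_inj.mp habs
    have hAeq : Aset n x = Aset n y := by
      apply Finset.eq_of_subset_of_card_le (Aset_subset n hchain)
      have h1 := Finset.card_le_card (Aset_subset n hchain)
      have h2 := Finset.card_le_card (Bset_subset n hchain)
      rw [sval, sval] at hs
      omega
    have hBeq : Bset n x = Bset n y := by
      apply Finset.eq_of_subset_of_card_le (Bset_subset n hchain)
      have h1 := Finset.card_le_card (Aset_subset n hchain)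
      have h2 := Finset.card_le_card (Bset_subset n hchain)
      rw [sval, sval] at hs
      omega
    have hlam : lamK n k col x = lamK n k col y := by
      rw [lamK_small n k col hbx, lamK_small n k col hby, mnK, mnK, hAeq, hBeq, sval,
        sval, hAeq, hBeq]
    rw [hlam] at heq
    have habs2 : |lamK n k col y| = (sval n y : ℤ) := lamK_abs_small n k col hby
    have : lamK n k col y = 0 := by omega
    rw [this] at habs2
    simp at habs2
    omega

include hk hcol in
lemma lamK_bound (hn : 2*k ≤ n) {x : Fin n → ℤ} (hx : x ≠ 0) :
    |lamK n k col x| ≤ (n : ℤ) - 1 := by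
  by_cases hbig : 2*k - 1 ≤ sval n x
  · rw [lamK_abs_big n k col hbig hx]
    have := MvK_bound n k col (unionCol_nonempty n k col hbig hk)
    have hk2 : 2*k - 1 + MvK n k col x ≤ n - 1 := by omega
    push_cast
    omega
  · rw [lamK_abs_small n k col hbig]
    have := sval_le n x
    have h2 : sval n x ≤ 2*k - 2 := by omega
    have : sval n x ≤ n - 1 := by omega
    push_cast
    omega

include hk hcol in
theorem kneser_reduction (hn : 2*k ≤ n) : False := by
  obtain ⟨x, hx0, hxge⟩ := fan (n := n) (by omega) (lamK n k col)
    (fun x hx => lamK_anti n k col hk hcol hx)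
    (fun x y hx hch => lamK_comp n k col hk hcol hx hch)
  have := lamK_bound n k col hk hcol hn hx0
  omega

end Reduction2

end KneserAux


namespace KneserAux

open Classical Finset

theorem kneser_not_colorable (n k : ℕ) (hk : 1 ≤ k) (hn : 2*k - 1 ≤ n) :
    ¬ (KneserGraph n k).Colorable (n + 1 - 2*k) := by
  intro hc
  obtain ⟨C⟩ := hc
  obtain ⟨S₀, hS₀sub, hS₀⟩ := Finset.exists_subset_card_eq
    (show k ≤ (univ : Finset (Fin n)).card by simp; omega)
  have hvalid : ∀ (S T : Finset (Fin n)) (hS : S.card = k) (hT : T.card = k),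
      Disjoint S T → C ⟨S, hS⟩ ≠ C ⟨T, hT⟩ := by
    intro S T hS hT hdisj
    apply C.valid
    refine ⟨?_, hdisj⟩
    intro hST
    have : S = T := congrArg Subtype.val hST
    subst this
    have : S = ∅ := Finset.eq_empty_of_forall_notMem
      (fun a ha => (Finset.disjoint_left.mp hdisj ha) ha)
    rw [this] at hS
    simp at hS
    omega
  by_cases h2 : 2*k ≤ n
  · set col : Finset (Fin n) → Fin (n + 1 - 2*k) := fun S =>
      if h : S.card = k then C ⟨S, h⟩ else C ⟨S₀, hS₀⟩ with hcoldef
    have hcol : ∀ S T : Finset (Fin n), S.card = k → T.card = k → Disjoint S T →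
        col S ≠ col T := by
      intro S T hS hT hdisj
      rw [hcoldef]
      simp only [dif_pos hS, dif_pos hT]
      exact hvalid S T hS hT hdisj
    exact kneser_reduction n k col hk hcol h2
  · have hz : n + 1 - 2*k = 0 := by omega
    have v := C ⟨S₀, hS₀⟩
    rw [hz] at v
    exact v.elim0

theorem kneser_colorable (n k : ℕ) (hk : 1 ≤ k) (hn : 2*k - 1 ≤ n) :
    (KneserGraph n k).Colorable (n + 2 - 2*k) := by
  classical
  have hSne : ∀ S : {S : Finset (Fin n) // S.card = k}, S.1.Nonempty := by
    intro S
    rw [← Finset.card_pos, S.2]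
    omega
  refine ⟨SimpleGraph.Coloring.mk
    (fun S => ⟨min ((S.1.min' (hSne S)).val) (n + 1 - 2*k), by omega⟩) ?_⟩
  intro S T hadj heq
  obtain ⟨hST, hdisj⟩ := hadj
  have hvals : min ((S.1.min' (hSne S)).val) (n + 1 - 2*k)
      = min ((T.1.min' (hSne T)).val) (n + 1 - 2*k) := congrArg Fin.val heq
  set c := n + 1 - 2*k
  set ms := (S.1.min' (hSne S)).val
  set mt := (T.1.min' (hSne T)).val
  by_cases hms : ms < c
  · have hmt : mt = ms := by omega
    have : (S.1.min' (hSne S)) = (T.1.min' (hSne T)) := Fin.ext (by omega)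
    have hmem1 := Finset.min'_mem S.1 (hSne S)
    have hmem2 := Finset.min'_mem T.1 (hSne T)
    rw [this] at hmem1
    exact Finset.disjoint_left.mp hdisj hmem1 hmem2
  · have hmt : ¬ (mt < c) := by omega
    -- S ∪ T lives in the top 2k-1 coordinates
    have hsub : S.1 ∪ T.1 ⊆ univ.filter (fun i : Fin n => c ≤ i.val) := by
      intro i hi
      rw [Finset.mem_filter]
      refine ⟨Finset.mem_univ _, ?_⟩
      rcases Finset.mem_union.mp hi with h | h
      · have := Finset.min'_le S.1 i h
        have : ms ≤ i.val := this
        omega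
      · have := Finset.min'_le T.1 i h
        have : mt ≤ i.val := this
        omega
    have hcard1 : (S.1 ∪ T.1).card = 2*k := by
      rw [Finset.card_union_of_disjoint hdisj, S.2, T.2]
      omega
    have hcard2 : (univ.filter (fun i : Fin n => c ≤ i.val)).card ≤ 2*k - 1 := by
      have := Finset.card_le_card_of_injOn
        (f := fun i : Fin n => (⟨i.val - c, by
          have := i.isLt
          omega⟩ : Fin (2*k - 1)))
        (s := univ.filter (fun i : Fin n => c ≤ i.val)) (t := univ)
        (fun i _ => Finset.mem_univ _)
        (by
          intro i hi j hj hij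
          rw [Finset.mem_coe, Finset.mem_filter] at hi hj
          have := congrArg Fin.val hij
          simp only [Fin.mk.injEq] at this ⊢
          exact Fin.ext (by omega))
      simpa using this
    have := Finset.card_le_card hsub
    omega

end KneserAux

/-- Kneser's conjecture: for `k ≥ 1` and `n ≥ 2k-1`,
the chromatic number of the Kneser graph `KG(n,k)` equals `n - 2k + 2`. -/
theorem kneser_conjecture (n k : ℕ) (hk : 1 ≤ k) (hn : 2 * k - 1 ≤ n) :
    (KneserGraph n k).chromaticNumber = ((n + 2 - 2 * k : ℕ) : ℕ∞) := by
  apply le_antisymm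
  · exact (KneserAux.kneser_colorable n k hk hn).chromaticNumber_le
  · by_contra h
    push_neg at h
    have hne : (KneserGraph n k).chromaticNumber ≠ ⊤ := ne_top_of_lt h
    obtain ⟨c, hc⟩ := WithTop.ne_top_iff_exists.mp hne
    have hlt : c < n + 2 - 2*k := by
      rw [← hc] at h
      exact ENat.coe_lt_coe.mp h
    have hcol : (KneserGraph n k).Colorable c :=
      SimpleGraph.chromaticNumber_le_iff_colorable.mp (le_of_eq hc.symm)
    have : (KneserGraph n k).Colorable (n + 1 - 2*k) := hcol.mono (by omega)
    exact KneserAux.kneser_not_colorable n k hk hn this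
end

section
/- In the compatibility graph C_P of a Z_r-poset P, if A_1,...,A_k are vertices forming a clique and A_k is chosen such that for each j < k some nonidentity element ω^{s_j} satisfies ω^{s_j}.A_j ≤ A_k, and moreover the coordinates of A_k (viewed as a tuple in Hom_p(K_r, H)) are pairwise disjoint, then the exponents s_1,...,s_{k-1} ∈ {1,...,r-1} are pairwise distinct; consequently k ≤ r. -/
/-- If `A_1, ..., A_m, A_k` form a clique in `C_{Hom_p(K_r, H)}`, the coordinates of the
vertex `A_k` are pairwise disjoint, and for each `j` a nonidentity shift `s j` satisfies
`ω^{s j}.A_j ≤ A_k`, then the exponents `s j` are pairwise distinct; hence `m + 1 ≤ r`. -/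
theorem clique_shift_exponents_distinct {V : Type*} [Fintype V] (H : SimpleGraph V)
    (r m : ℕ) (hr : 2 ≤ r)
    (A : Fin m → HomPoset H r) (Ak : HomPoset H r)
    (hinj : Function.Injective A)
    (hclique : ∀ i j, i ≠ j → (compatGraph H r).Adj (A i) (A j))
    (hAk : ∀ i, (compatGraph H r).Adj (A i) Ak)
    (hdisj : ∀ i j : ZMod r, i ≠ j → Disjoint (Ak.1 i) (Ak.1 j))
    (s : Fin m → ZMod r) (hs0 : ∀ i, s i ≠ 0)
    (hsle : ∀ i, homShift H (s i) (A i) ≤ Ak) :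
    Function.Injective s ∧ m + 1 ≤ r := by
  haveI : NeZero r := ⟨by omega⟩
  have h1 : ∀ i t, (A i).1 t ⊆ Ak.1 (t - s i) := by
    intro i t
    have h : ∀ u, (A i).1 (u + s i) ⊆ Ak.1 u := hsle i
    have h2 := h (t - s i)
    simpa using h2
  have hinj_s : Function.Injective s := by
    intro i j hij
    by_contra hne
    obtain ⟨-, g, hg, hc⟩ := hclique i j hne
    have contra : ∀ (x : V) (a b : ZMod r), a ≠ b → x ∈ Ak.1 a → x ∈ Ak.1 b → False :=
      fun x a b h ha hb => Set.disjoint_left.mp (hdisj a b h) ha hb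
    rcases hc with h | h | h | h
    · have h' : ∀ t, (A i).1 t ⊆ (A j).1 (t + g) := h
      obtain ⟨x, hx⟩ := (A i).2.1 0
      refine contra x _ _ (fun he => hg ?_) (h1 i 0 hx) (h1 j (0 + g) (h' 0 hx))
      rw [hij] at he; linear_combination -he
    · have h' : ∀ t, (A j).1 (t + g) ⊆ (A i).1 t := h
      obtain ⟨x, hx⟩ := (A j).2.1 (0 + g)
      refine contra x _ _ (fun he => hg ?_) (h1 j (0 + g) hx) (h1 i 0 (h' 0 hx))
      rw [hij] at he; linear_combination he
    · have h' : ∀ t, (A j).1 t ⊆ (A i).1 (t + g) := h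
      obtain ⟨x, hx⟩ := (A j).2.1 0
      refine contra x _ _ (fun he => hg ?_) (h1 j 0 hx) (h1 i (0 + g) (h' 0 hx))
      rw [hij] at he; linear_combination -he
    · have h' : ∀ t, (A i).1 (t + g) ⊆ (A j).1 t := h
      obtain ⟨x, hx⟩ := (A i).2.1 (0 + g)
      refine contra x _ _ (fun he => hg ?_) (h1 i (0 + g) hx) (h1 j 0 (h' 0 hx))
      rw [hij] at he; linear_combination he
  refine ⟨hinj_s, ?_⟩
  have hinj2 : Function.Injective (Fin.cons (0 : ZMod r) s : Fin (m + 1) → ZMod r) := by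
    intro a b hab
    induction a using Fin.cases with
    | zero =>
      induction b using Fin.cases with
      | zero => rfl
      | succ b => simp only [Fin.cons_zero, Fin.cons_succ] at hab
                  exact absurd hab.symm (hs0 b)
    | succ a =>
      induction b using Fin.cases with
      | zero => simp only [Fin.cons_zero, Fin.cons_succ] at hab
                exact absurd hab (hs0 a)
      | succ b => simp only [Fin.cons_succ] at hab
                  exact congrArg Fin.succ (hinj_s hab)
  have := Fintype.card_le_of_injective _ hinj2
  simpa [ZMod.card] using this
end

section
/- For r = 2 the compatibility graph C_{Hom_p(K_2, H)} of any graph H is triangle-free, and for every C there exists n, k with χ(C_{Hom_p(K_2, KG(n,k))}) ≥ C; hence there exist triangle-free graphs of arbitrarily large chromatic number. -/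
namespace TFHCaux

variable {V : Type*} {H : SimpleGraph V}

lemma hp_le_iff {x y : HomPoset H 2} : x ≤ y ↔ ∀ i, x.1 i ⊆ y.1 i := Iff.rfl

lemma shift_val (g : ZMod 2) (x : HomPoset H 2) (i : ZMod 2) :
    (homShift H g x).1 i = x.1 (i + g) := rfl

lemma add11 (i : ZMod 2) : i + 1 + 1 = i := by
  have h : (1 + 1 : ZMod 2) = 0 := by decide
  rw [add_assoc, h, add_zero]

lemma swap_le {x y : HomPoset H 2} : x ≤ homShift H 1 y ↔ homShift H 1 x ≤ y := by
  constructor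
  · intro h i
    have h2 := h (i + 1)
    rw [shift_val] at h2 ⊢
    rwa [add11] at h2
  · intro h i
    have h2 := h (i + 1)
    rw [shift_val] at h2 ⊢
    rwa [add11] at h2

lemma shift_le_shift {x y : HomPoset H 2} (h : homShift H 1 x ≤ homShift H 1 y) : x ≤ y := by
  intro i
  have h2 := h (i + 1)
  rw [shift_val, shift_val] at h2
  rwa [add11] at h2

/-- If `u ≤ v` and `u` is comparable with the swap of `v`, we get a loop in `H`. -/
lemma not_le_and_comparable {u v : HomPoset H 2} (hle : u ≤ v)
    (h : u ≤ homShift H 1 v ∨ homShift H 1 v ≤ u) : False := by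
  rcases h with h | h
  · obtain ⟨a, ha⟩ := u.2.1 0
    have h1 : a ∈ v.1 0 := hle 0 ha
    have h2 : a ∈ v.1 1 := by
      have := h 0 ha
      rwa [shift_val, show (0 : ZMod 2) + 1 = 1 from rfl] at this
    exact H.loopless.irrefl a (v.2.2 0 1 (by decide) a h1 a h2)
  · obtain ⟨a, ha⟩ := v.2.1 1
    have h0 : a ∈ u.1 0 := by
      have := h 0
      rw [shift_val, show (0 : ZMod 2) + 1 = 1 from rfl] at this
      exact this ha
    exact H.loopless.irrefl a (v.2.2 0 1 (by decide) a (hle 0 h0) a ha)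

lemma adj_comparable {x y : HomPoset H 2} (h : (compatGraph H 2).Adj x y) :
    x ≤ homShift H 1 y ∨ homShift H 1 y ≤ x := by
  obtain ⟨-, g, hg, hc⟩ := h
  have hg1 : g = 1 := (by decide : ∀ h : ZMod 2, h ≠ 0 → h = 1) g hg
  subst hg1
  rcases hc with h | h | h | h
  · exact Or.inl h
  · exact Or.inr h
  · exact Or.inr (swap_le.mp h)
  · exact Or.inl (swap_le.mpr h)

lemma comparable_symm {x y : HomPoset H 2}
    (h : x ≤ homShift H 1 y ∨ homShift H 1 y ≤ x) :
    y ≤ homShift H 1 x ∨ homShift H 1 x ≤ y := by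
  rcases h with h | h
  · exact Or.inr (swap_le.mp h)
  · exact Or.inl (swap_le.mpr h)

theorem part1 (V : Type*) (H : SimpleGraph V) : (compatGraph H 2).CliqueFree 3 := by
  classical
  intro t ht
  obtain ⟨a, b, c, hab, hac, hbc, -⟩ := SimpleGraph.is3Clique_iff.mp ht
  have h1 := adj_comparable hab
  have h2 := adj_comparable hac
  have h3 := adj_comparable hbc
  rcases h1 with h1 | h1 <;> rcases h3 with h3 | h3
  · exact not_le_and_comparable (le_trans h1 (swap_le.mp h3)) h2
  · rcases h2 with h2 | h2
    · exact not_le_and_comparable (le_trans h2 h3) (Or.inl h1)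
    · exact not_le_and_comparable (le_trans (swap_le.mpr h2) (swap_le.mp h1))
        (comparable_symm (Or.inr h3))
  · rcases h2 with h2 | h2
    · exact not_le_and_comparable (le_trans (swap_le.mpr h1) (swap_le.mp h2)) (Or.inl h3)
    · exact not_le_and_comparable (le_trans h3 h2) (comparable_symm (Or.inr h1))
  · exact not_le_and_comparable (le_trans (swap_le.mpr h3) h1) (comparable_symm h2)

/-- A family of disjoint nonempty set pairs whose swap-inclusion relation is not
`k`-colorable (a Descartes-style construction). -/
lemma exists_family : ∀ k : ℕ, ∃ (Ω ι : Type) (_ : Finite Ω) (_ : Fintype ι) (_ : Nonempty ι)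
    (A B : ι → Set Ω),
      (∀ v, (A v).Nonempty) ∧ (∀ v, (B v).Nonempty) ∧ (∀ v, Disjoint (A v) (B v)) ∧
      (∀ c : ι → Fin k, ∃ u v, ((A u ⊆ B v ∧ B u ⊆ A v) ∨ (A v ⊆ B u ∧ B v ⊆ A u)) ∧
        c u = c v)
  | 0 => by
    refine ⟨Bool, PUnit, inferInstance, inferInstance, inferInstance,
      fun _ => {true}, fun _ => {false}, fun _ => ⟨true, rfl⟩, fun _ => ⟨false, rfl⟩,
      fun _ => by simp, fun c => (c PUnit.unit).elim0⟩
  | (k + 1) => by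
    classical
    obtain ⟨Ω, ι, hΩfin, hιfin, hιne, A, B, hA, hB, hD, hcol⟩ := exists_family k
    set N := Fintype.card ι with hN
    have hN1 : 1 ≤ N := Fintype.card_pos
    set m := (k + 1) * N + 1 with hm
    have hNm : N ≤ m := by
      calc N = 1 * N := (one_mul N).symm
      _ ≤ (k + 1) * N := Nat.mul_le_mul_right N (by omega)
      _ ≤ m := by omega
    let TT := {T : Finset (Fin m) // T.card = N}
    have hcardT : ∀ T : TT, Fintype.card {x // x ∈ T.1} = Fintype.card ι := fun T => by
      rw [Fintype.card_coe, T.2]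
    let eqv : ∀ T : TT, {x // x ∈ T.1} ≃ ι := fun T => Fintype.equivOfCardEq (hcardT T)
    refine ⟨TT × Ω, Fin m ⊕ (TT × ι), inferInstance, inferInstance,
      ⟨Sum.inl ⟨0, by omega⟩⟩,
      (fun x => match x with
        | .inl s => {p | ∃ h : s ∈ p.1.1, p.2 ∈ B (eqv p.1 ⟨s, h⟩)}
        | .inr (T, v) => {p | p.1 = T ∧ p.2 ∈ A v}),
      (fun x => match x with
        | .inl s => {p | ∃ h : s ∈ p.1.1, p.2 ∈ A (eqv p.1 ⟨s, h⟩)}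
        | .inr (T, v) => {p | p.1 = T ∧ p.2 ∈ B v}),
      ?_, ?_, ?_, ?_⟩
    · rintro (s | ⟨T, v⟩)
      · obtain ⟨t, hst, htc⟩ := Finset.exists_superset_card_eq
          (show ({s} : Finset (Fin m)).card ≤ N by simpa using hN1)
          (by simpa using hNm)
        have hs : s ∈ t := hst (Finset.mem_singleton_self s)
        exact ⟨(⟨t, htc⟩, (hB (eqv ⟨t, htc⟩ ⟨s, hs⟩)).some), hs,
          (hB (eqv ⟨t, htc⟩ ⟨s, hs⟩)).some_mem⟩
      · exact ⟨(T, (hA v).some), rfl, (hA v).some_mem⟩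
    · rintro (s | ⟨T, v⟩)
      · obtain ⟨t, hst, htc⟩ := Finset.exists_superset_card_eq
          (show ({s} : Finset (Fin m)).card ≤ N by simpa using hN1)
          (by simpa using hNm)
        have hs : s ∈ t := hst (Finset.mem_singleton_self s)
        exact ⟨(⟨t, htc⟩, (hA (eqv ⟨t, htc⟩ ⟨s, hs⟩)).some), hs,
          (hA (eqv ⟨t, htc⟩ ⟨s, hs⟩)).some_mem⟩
      · exact ⟨(T, (hB v).some), rfl, (hB v).some_mem⟩
    · rintro (s | ⟨T, v⟩)
      · rw [Set.disjoint_left]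
        rintro ⟨T, e⟩ ⟨h1, hb⟩ ⟨h2, ha⟩
        exact Set.disjoint_left.mp (hD (eqv T ⟨s, h1⟩)) ha hb
      · rw [Set.disjoint_left]
        rintro ⟨T', e⟩ ⟨h1, ha⟩ ⟨h2, hb⟩
        exact Set.disjoint_left.mp (hD v) ha hb
    · intro c
      obtain ⟨a, -, ha⟩ := Finset.exists_lt_card_fiber_of_mul_lt_card_of_maps_to
        (f := fun s : Fin m => c (Sum.inl s)) (t := (Finset.univ : Finset (Fin (k + 1)))) (n := N) (s := (Finset.univ : Finset (Fin m)))
        (fun _ _ => Finset.mem_univ _)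
        (by simp only [Finset.card_univ, Fintype.card_fin]; omega)
      obtain ⟨t, hts, htc⟩ := Finset.exists_subset_card_eq (le_of_lt ha)
      set T : TT := ⟨t, htc⟩ with hT
      by_cases hex : ∃ v : ι, c (Sum.inr (T, v)) = a
      · obtain ⟨v, hv⟩ := hex
        set s' : {x // x ∈ T.1} := (eqv T).symm v with hs'
        have hvv : eqv T s' = v := Equiv.apply_symm_apply _ v
        refine ⟨Sum.inr (T, v), Sum.inl s'.1, Or.inl ⟨?_, ?_⟩, ?_⟩
        · rintro ⟨T₁, e⟩ ⟨hT₁, he⟩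
          dsimp only at hT₁
          subst hT₁
          refine ⟨s'.2, ?_⟩
          rwa [show (⟨s'.1, s'.2⟩ : {x // x ∈ T.1}) = s' from rfl, hvv]
        · rintro ⟨T₁, e⟩ ⟨hT₁, he⟩
          dsimp only at hT₁
          subst hT₁
          refine ⟨s'.2, ?_⟩
          rwa [show (⟨s'.1, s'.2⟩ : {x // x ∈ T.1}) = s' from rfl, hvv]
        · have hmem : s'.1 ∈ Finset.univ.filter (fun s : Fin m => c (Sum.inl s) = a) :=
            hts s'.2
          have := (Finset.mem_filter.mp hmem).2
          rw [hv, this]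
      · push_neg at hex
        choose c2 hc2 using fun v => Fin.exists_succAbove_eq (hex v)
        obtain ⟨u, v, hR, heq⟩ := hcol c2
        refine ⟨Sum.inr (T, u), Sum.inr (T, v), ?_, ?_⟩
        · rcases hR with ⟨hab1, hab2⟩ | ⟨hab1, hab2⟩
          · exact Or.inl ⟨fun p hp => ⟨hp.1, hab1 hp.2⟩, fun p hp => ⟨hp.1, hab2 hp.2⟩⟩
          · exact Or.inr ⟨fun p hp => ⟨hp.1, hab1 hp.2⟩, fun p hp => ⟨hp.1, hab2 hp.2⟩⟩
        · rw [← hc2 u, ← hc2 v, heq]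

theorem part2 (C : ℕ) : ∃ n : ℕ,
    (C : ℕ∞) ≤ (compatGraph (KneserGraph n 1) 2).chromaticNumber := by
  classical
  obtain ⟨Ω, ι, hΩfin, hιfin, hιne, A, B, hA, hB, hD, hcol⟩ := exists_family C
  have : Fintype Ω := Fintype.ofFinite Ω
  refine ⟨Fintype.card Ω, ?_⟩
  set n := Fintype.card Ω with hn
  let φ : Ω ≃ Fin n := Fintype.equivFin Ω
  let ψ : Ω → {S : Finset (Fin n) // S.card = 1} := fun a => ⟨{φ a}, Finset.card_singleton _⟩
  have hψinj : Function.Injective ψ := by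
    intro x y h
    exact φ.injective (Finset.singleton_injective (congrArg Subtype.val h))
  have hcases : ∀ i : ZMod 2, i = 0 ∨ i = 1 := by decide
  have hmem : ∀ v : ι, HomPosetMem (KneserGraph n 1) 2
      (fun i => if i = 0 then ψ '' (A v) else ψ '' (B v)) := by
    intro v
    constructor
    · intro i
      by_cases hi : i = 0
      · simpa [hi] using (hA v).image ψ
      · simpa [hi] using (hB v).image ψ
    · intro i j hij x hx y hy
      have hadjψ : ∀ p q : Ω, p ∈ A v → q ∈ B v →
          (KneserGraph n 1).Adj (ψ p) (ψ q) := by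
        intro p q hp hq
        have hpq : p ≠ q := fun h => Set.disjoint_left.mp (hD v) hp (h ▸ hq)
        refine And.intro (hψinj.ne hpq) ?_
        simpa [ψ, Finset.disjoint_singleton] using (φ.injective.ne hpq)
      rcases hcases i with hi | hi <;> rcases hcases j with hj | hj <;>
        subst hi <;> subst hj
      · exact absurd rfl hij
      · simp only [if_pos rfl, if_neg (by decide : (1 : ZMod 2) ≠ 0)] at hx hy
        obtain ⟨p, hp, rfl⟩ := hx
        obtain ⟨q, hq, rfl⟩ := hy
        exact hadjψ p q hp hq
      · simp only [if_pos rfl, if_neg (by decide : (1 : ZMod 2) ≠ 0)] at hx hy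
        obtain ⟨p, hp, rfl⟩ := hx
        obtain ⟨q, hq, rfl⟩ := hy
        exact ((KneserGraph n 1).adj_symm (hadjψ q p hq hp))
      · exact absurd rfl hij
  let Φ : ι → HomPoset (KneserGraph n 1) 2 := fun v =>
    ⟨fun i => if i = 0 then ψ '' (A v) else ψ '' (B v), hmem v⟩
  have key : ∀ u v : ι, (A u ⊆ B v ∧ B u ⊆ A v) →
      (compatGraph (KneserGraph n 1) 2).Adj (Φ u) (Φ v) := by
    intro u v ⟨h1, h2⟩
    have hne : Φ u ≠ Φ v := by
      intro h
      have hval : (Φ u).1 0 = (Φ v).1 0 := by rw [h]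
      simp only [Φ, if_pos rfl] at hval
      have hAA : A u = A v := (Set.image_eq_image hψinj).mp hval
      obtain ⟨a, ha⟩ := hA u
      exact Set.disjoint_left.mp (hD v) (hAA ▸ ha) (h1 ha)
    refine ⟨hne, 1, by decide, Or.inl ?_⟩
    intro i
    rcases hcases i with hi | hi <;> subst hi
    · show (if (0 : ZMod 2) = 0 then ψ '' (A u) else ψ '' (B u)) ⊆
        (if (0 : ZMod 2) + 1 = 0 then ψ '' (A v) else ψ '' (B v))
      rw [if_pos rfl, if_neg (by decide : (0 : ZMod 2) + 1 ≠ 0)]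
      exact Set.image_mono h1
    · show (if (1 : ZMod 2) = 0 then ψ '' (A u) else ψ '' (B u)) ⊆
        (if (1 : ZMod 2) + 1 = 0 then ψ '' (A v) else ψ '' (B v))
      rw [if_neg (by decide : (1 : ZMod 2) ≠ 0), if_pos (by decide : (1 : ZMod 2) + 1 = 0)]
      exact Set.image_mono h2
  have hnotcol : ¬ (compatGraph (KneserGraph n 1) 2).Colorable C := by
    rintro ⟨col⟩
    obtain ⟨u, v, hR, heq⟩ := hcol (fun v => col (Φ v))
    have hadj : (compatGraph (KneserGraph n 1) 2).Adj (Φ u) (Φ v) := by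
      rcases hR with h | h
      · exact key u v h
      · exact ((compatGraph (KneserGraph n 1) 2).adj_symm (key v u h))
    exact col.valid hadj heq
  rw [SimpleGraph.chromaticNumber]
  refine le_iInf₂ fun t ht => ?_
  have htC : C ≤ t := by
    by_contra h
    push_neg at h
    exact hnotcol (SimpleGraph.Colorable.mono (le_of_lt h) ht)
  exact_mod_cast htC

end TFHCaux

/-- The compatibility graph `C_{Hom_p(K_2, H)}` is triangle-free for every graph `H`,
the graphs `C_{Hom_p(K_2, KG(n,k))}` have arbitrarily large chromatic number, and hence
there exist triangle-free graphs of arbitrarily large chromatic number. -/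
theorem triangle_free_high_chromatic :
    (∀ (V : Type) [Fintype V] (H : SimpleGraph V), (compatGraph H 2).CliqueFree 3) ∧
    (∀ C : ℕ, ∃ n k : ℕ,
      (C : ℕ∞) ≤ (compatGraph (KneserGraph n k) 2).chromaticNumber) ∧
    (∀ C : ℕ, ∃ (V : Type) (_ : Fintype V) (G : SimpleGraph V),
      G.CliqueFree 3 ∧ (C : ℕ∞) ≤ G.chromaticNumber) := by
  refine ⟨fun V _ H => TFHCaux.part1 V H, fun C => ?_, fun C => ?_⟩
  · obtain ⟨n, hn⟩ := TFHCaux.part2 C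
    exact ⟨n, 1, hn⟩
  · obtain ⟨n, hn⟩ := TFHCaux.part2 C
    have hfin : Finite (HomPoset (KneserGraph n 1) 2) := by
      unfold HomPoset
      exact Subtype.finite
    exact ⟨HomPoset (KneserGraph n 1) 2, Fintype.ofFinite _,
      compatGraph (KneserGraph n 1) 2, TFHCaux.part1 _ _, hn⟩
end
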